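/- arXiv:0906.3728 — 7 statements merged into one kernel-verified Lean document; each statement's English description precedes it below -/
import Mathlib

section
/- The polynomial F(X,u) = 𝒫(X) − u𝒬(X) is irreducible over the rational function field K(u). -/
open Polynomial

namespace RikunaAux

variable (R : Type*) [CommRing R]

/-- constants-to-inner-variable hom `R[u] →+* R[X][u]` sending `u ↦ X(outer)`. -/
noncomputable def F1 : R[X] →+* Polynomial (R[X]) :=
  eval₂RingHom ((C : R[X] →+* Polynomial (R[X])).comp (C : R →+* R[X])) X

/-- the variable-swap ring hom on bivariate polynomials. -/
noncomputable def swap : Polynomial (R[X]) →+* Polynomial (R[X]) :=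
  eval₂RingHom (F1 R) (C X)

lemma swap_map_C (p : R[X]) : swap R (p.map C) = C p := by
  have h : (F1 R).comp (C : R →+* R[X]) =
      ((C : R[X] →+* Polynomial (R[X])).comp (C : R →+* R[X])) :=
    RingHom.ext fun a => eval₂_C _ _
  have h2 : swap R (p.map C) = eval₂ ((C : R[X] →+* Polynomial (R[X])).comp C) (C X) p := by
    simp only [swap, coe_eval₂RingHom, eval₂_map, h]
  rw [h2, ← hom_eval₂ p C C X, eval₂_C_X]

lemma swap_C_X : swap R (C X) = X := by
  simp only [swap, coe_eval₂RingHom, eval₂_C, F1, eval₂_X]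

lemma swap_X : swap R (X : Polynomial (R[X])) = C X := by
  have : (X : Polynomial (R[X])) = (X : R[X]).map C := by simp
  rw [this, swap_map_C]

lemma swap_swap (p : Polynomial (R[X])) : swap R (swap R p) = p := by
  have hcomp : (swap R).comp (swap R) = RingHom.id _ := by
    apply ringHom_ext'
    · apply ringHom_ext'
      · ext a
        have : (C (C a) : Polynomial (R[X])) = (C a : R[X]).map C := by simp
        simp only [RingHom.comp_apply, RingHom.id_apply, this, swap_map_C]
      · simp only [RingHom.comp_apply, RingHom.id_apply, swap_C_X, swap_X]
    · simp only [RingHom.comp_apply, RingHom.id_apply, swap_X, swap_C_X]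
  exact RingHom.congr_fun hcomp p

/-- the variable-swap ring equiv. -/
noncomputable def swapEquiv : Polynomial (R[X]) ≃+* Polynomial (R[X]) :=
  { toFun := swap R, invFun := swap R, left_inv := swap_swap R, right_inv := swap_swap R,
    map_mul' := map_mul _, map_add' := map_add _ }

lemma swapEquiv_apply (p : Polynomial (R[X])) : swapEquiv R p = swap R p := rfl

lemma irreducible_linear {S : Type*} [CommRing S] [IsDomain S] {a b : S}
    (hb : b ≠ 0) (h : IsCoprime a b) : Irreducible (C a - C b * X) := by
  have hp : (C a - C b * X) = C (-b) * X + C a := by rw [map_neg]; ring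
  have hdeg : (C a - C b * X).natDegree = 1 := by
    rw [hp]; exact natDegree_linear (neg_ne_zero.mpr hb)
  have hne : (C a - C b * X) ≠ 0 := fun h0 => by simp [h0] at hdeg
  have key : ∀ z : S[X], z.natDegree = 0 → z ∣ C a - C b * X → IsUnit z := by
    intro z hz hdvd
    obtain ⟨r, rfl⟩ := natDegree_eq_zero.mp hz
    have hco := (C_dvd_iff_dvd_coeff r _).mp hdvd
    have h0 : r ∣ a := by simpa using hco 0
    have h1 : r ∣ b := by
      have h2 := hco 1
      simp only [coeff_sub, coeff_C, coeff_C_mul, coeff_X_one, mul_one] at h2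
      simpa using dvd_neg.mpr h2
    exact isUnit_C.mpr (h.isUnit_of_dvd' h0 h1)
  constructor
  · intro hu
    have := natDegree_eq_zero_of_isUnit hu
    omega
  · intro x y hxy
    have hx0 : x ≠ 0 := fun h0 => hne (by rw [hxy, h0, zero_mul])
    have hy0 : y ≠ 0 := fun h0 => hne (by rw [hxy, h0, mul_zero])
    have hsum : x.natDegree + y.natDegree = 1 := by
      rw [← natDegree_mul hx0 hy0, ← hxy, hdeg]
    rcases Nat.eq_zero_or_pos x.natDegree with hx | hx
    · exact Or.inl (key x hx (Dvd.intro y hxy.symm))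
    · have hy : y.natDegree = 0 := by omega
      exact Or.inr (key y hy (Dvd.intro_left x hxy.symm))

end RikunaAux

/-- Rikuna's polynomial `F(X,u) = 𝒫(X) - u 𝒬(X)` is irreducible over `K(u)`.
Here `ℓ` is an odd prime, `K` a field (realized as a subfield of a field `L`) of
characteristic not dividing `ℓ`, `ζ ∈ L` a primitive `ℓ`-th root of unity with `ζ ∉ K`
and `ζ + ζ⁻¹ ∈ K`, and `P, Q` are the polynomials with coefficients in `K` whose images
in `L[X]` are `𝒫(X) = (ζ⁻¹ - ζ)⁻¹ (ζ⁻¹(X - ζ)^ℓ - ζ(X - ζ⁻¹)^ℓ)` and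
`𝒬(X) = (ζ⁻¹ - ζ)⁻¹ ((X - ζ)^ℓ - (X - ζ⁻¹)^ℓ)`; `u` is the variable of `K(u) = RatFunc K`. -/
theorem stmt_0 (ℓ : ℕ) (hℓ : ℓ.Prime) (hodd : Odd ℓ)
    (L : Type*) [Field L] (hchar : (ℓ : L) ≠ 0)
    (K : Subfield L) (ζ : L) (hζ : IsPrimitiveRoot ζ ℓ) (hζK : ζ ∉ K) (hω : ζ + ζ⁻¹ ∈ K)
    (P Q : Polynomial K)
    (hP : P.map K.subtype =
      C (ζ⁻¹ - ζ)⁻¹ * (C ζ⁻¹ * (X - C ζ) ^ ℓ - C ζ * (X - C ζ⁻¹) ^ ℓ))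
    (hQ : Q.map K.subtype =
      C (ζ⁻¹ - ζ)⁻¹ * ((X - C ζ) ^ ℓ - (X - C ζ⁻¹) ^ ℓ)) :
    Irreducible (P.map (algebraMap K (RatFunc K)) -
      C RatFunc.X * Q.map (algebraMap K (RatFunc K))) := by
  classical
  have hinj : Function.Injective (K.subtype) := fun a b hab => Subtype.ext hab
  have hℓ2 : 2 < ℓ := by
    rcases lt_or_eq_of_le hℓ.two_le with h | h
    · exact h
    · exfalso; rw [← h] at hodd; exact (by decide : ¬ Odd 2) hodd
  have hℓ0 : ℓ ≠ 0 := by omega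
  have hζ0 : ζ ≠ 0 := hζ.ne_zero hℓ0
  have hsq : ζ * ζ ≠ 1 := by
    intro h
    have hd := hζ.dvd_of_pow_eq_one 2 (by rw [pow_two]; exact h)
    have := Nat.le_of_dvd (by norm_num) hd
    omega
  have hne : ζ⁻¹ - ζ ≠ 0 := by
    intro h
    apply hsq
    have h1 : ζ⁻¹ = ζ := sub_eq_zero.mp h
    calc ζ * ζ = ζ * ζ⁻¹ := by rw [h1]
    _ = 1 := mul_inv_cancel₀ hζ0
  set c : L := (ζ⁻¹ - ζ)⁻¹ with hc_def
  have hc : c ≠ 0 := inv_ne_zero hne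
  have hc1 : c * (ζ⁻¹ - ζ) = 1 := inv_mul_cancel₀ hne
  set A : L[X] := (X - C ζ) ^ ℓ with hA_def
  set B : L[X] := (X - C ζ⁻¹) ^ ℓ with hB_def
  have hAm : A.Monic := (monic_X_sub_C (ζ : L)).pow _
  have hBm : B.Monic := (monic_X_sub_C (ζ⁻¹ : L)).pow _
  have hAd : A.natDegree = ℓ := by simp [hA_def, natDegree_pow]
  have hBd : B.natDegree = ℓ := by simp [hB_def, natDegree_pow]
  have hAc : A.coeff ℓ = 1 := by rw [← hAd]; exact hAm.coeff_natDegree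
  have hBc : B.coeff ℓ = 1 := by rw [← hBd]; exact hBm.coeff_natDegree
  -- coefficient and degree facts about P and Q
  have hPc : P.coeff ℓ = 1 := by
    apply hinj
    have h := congrArg (fun p : L[X] => p.coeff ℓ) hP
    simp only [coeff_map, coeff_C_mul, coeff_sub, hAc, hBc, mul_one] at h
    rw [h, map_one]
    exact hc1
  have hQc : Q.coeff ℓ = 0 := by
    apply hinj
    have h := congrArg (fun p : L[X] => p.coeff ℓ) hQ
    simp only [coeff_map, coeff_C_mul, coeff_sub, hAc, hBc] at h
    rw [h, map_zero]
    ring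
  have hPd : P.natDegree ≤ ℓ := by
    rw [← natDegree_map_eq_of_injective hinj P, hP, hA_def, hB_def]
    compute_degree
  have hQd : Q.natDegree ≤ ℓ := by
    rw [← natDegree_map_eq_of_injective hinj Q, hQ, hA_def, hB_def]
    compute_degree
  have hPdeg : P.natDegree = ℓ :=
    le_antisymm hPd (le_natDegree_of_ne_zero (by rw [hPc]; exact one_ne_zero))
  -- coprimality of P and Q
  have hXcop : IsCoprime ((X : L[X]) - C ζ) (X - C ζ⁻¹) := by
    refine ⟨C c, -C c, ?_⟩
    rw [← C_1, ← hc1, C_mul, C_sub]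
    ring
  have hAB : IsCoprime A B := by rw [hA_def, hB_def]; exact hXcop.pow
  have hCinv : (C ζ : L[X]) * C ζ⁻¹ = 1 := by rw [← C_mul, mul_inv_cancel₀ hζ0, C_1]
  have id1 : C ζ⁻¹ * (P.map K.subtype) - Q.map K.subtype = C (c * (ζ⁻¹ * ζ⁻¹ - 1)) * A := by
    rw [hP, hQ]
    simp only [C_mul, C_sub, C_1]
    linear_combination (-(C c * B)) * hCinv
  have id2 : C ζ * (P.map K.subtype) - Q.map K.subtype = C (c * (1 - ζ * ζ)) * B := by
    rw [hP, hQ]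
    simp only [C_mul, C_sub, C_1]
    linear_combination (C c * A) * hCinv
  have hk1 : c * (ζ⁻¹ * ζ⁻¹ - 1) ≠ 0 := by
    refine mul_ne_zero hc (sub_ne_zero.mpr ?_)
    intro h
    apply hsq
    have h2 := congrArg (fun t : L => t⁻¹) h
    simpa [mul_inv_rev] using h2
  have hk2 : c * (1 - ζ * ζ) ≠ 0 :=
    mul_ne_zero hc (sub_ne_zero.mpr (Ne.symm hsq))
  have hcop' : IsCoprime (P.map K.subtype) (Q.map K.subtype) := by
    rw [← EuclideanDomain.gcd_isUnit_iff]
    set d := EuclideanDomain.gcd (P.map K.subtype) (Q.map K.subtype) with hd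
    have hd1 : d ∣ P.map K.subtype := EuclideanDomain.gcd_dvd_left _ _
    have hd2 : d ∣ Q.map K.subtype := EuclideanDomain.gcd_dvd_right _ _
    have hdA : d ∣ C (c * (ζ⁻¹ * ζ⁻¹ - 1)) * A := by
      rw [← id1]; exact dvd_sub (hd1.mul_left _) hd2
    have hdB : d ∣ C (c * (1 - ζ * ζ)) * B := by
      rw [← id2]; exact dvd_sub (hd1.mul_left _) hd2
    have hu1 : IsUnit (C (c * (ζ⁻¹ * ζ⁻¹ - 1)) : L[X]) :=
      isUnit_C.mpr (isUnit_iff_ne_zero.mpr hk1)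
    have hu2 : IsUnit (C (c * (1 - ζ * ζ)) : L[X]) :=
      isUnit_C.mpr (isUnit_iff_ne_zero.mpr hk2)
    have hAB' : IsCoprime (C (c * (ζ⁻¹ * ζ⁻¹ - 1)) * A) (C (c * (1 - ζ * ζ)) * B) :=
      (isCoprime_mul_unit_left_left hu1 _ _).mpr
        ((isCoprime_mul_unit_left_right hu2 _ _).mpr hAB)
    exact hAB'.isUnit_of_dvd' hdA hdB
  have hcop : IsCoprime P Q := (isCoprime_map K.subtype).mp hcop'
  have hQ0 : Q ≠ 0 := by
    rintro rfl
    have h1 := isCoprime_zero_right.mp hcop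
    have h2 := natDegree_eq_zero_of_isUnit h1
    omega
  -- the bivariate polynomial g over K[u]
  set g : Polynomial (Polynomial K) := P.map C - C X * Q.map C with hg
  have hgc : g.coeff ℓ = 1 := by
    simp [hg, coeff_sub, coeff_C_mul, coeff_map, hPc, hQc]
  have hgd : g.natDegree ≤ ℓ := by
    rw [hg]
    refine le_trans (natDegree_sub_le _ _) (max_le (le_trans natDegree_map_le hPd) ?_)
    exact le_trans (natDegree_C_mul_le _ _) (le_trans natDegree_map_le hQd)
  have hgm : g.Monic := monic_of_natDegree_le_of_coeff_eq_one ℓ hgd hgc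
  have hswap : RikunaAux.swapEquiv K g = C P - C Q * X := by
    rw [RikunaAux.swapEquiv_apply, hg, RingHom.map_sub, RingHom.map_mul, RikunaAux.swap_map_C,
      RikunaAux.swap_map_C, RikunaAux.swap_C_X]
    ring
  have hirr : Irreducible g :=
    (MulEquiv.irreducible_iff (RikunaAux.swapEquiv K)).mp
      (by rw [hswap]; exact RikunaAux.irreducible_linear hQ0 hcop)
  have hfinal := (hgm.irreducible_iff_irreducible_map_fraction_map (K := RatFunc K)).mp hirr
  have hcomp : (algebraMap (Polynomial K) (RatFunc K)).comp (C : K →+* Polynomial K) =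
      algebraMap K (RatFunc K) := rfl
  have heq : g.map (algebraMap (Polynomial K) (RatFunc K)) =
      P.map (algebraMap K (RatFunc K)) - C RatFunc.X * Q.map (algebraMap K (RatFunc K)) := by
    rw [hg]
    simp only [Polynomial.map_sub, Polynomial.map_mul, map_map, map_C, RatFunc.algebraMap_X,
      hcomp]
  rwa [heq] at hfinal
end

section
/- Let q be an odd prime power and ℓ an odd prime not dividing q with q ≡ −1 (mod ℓ), let ζ be a primitive ℓ-th root of unity in the quadratic extension 𝔽_{q²} of 𝔽_q, and let ω = ζ + ζ^{-1}, which lies in 𝔽_q. Let m > 1 be an integer and γ ∈ 𝔽_q. If for every prime p dividing m the element γ² + ℓωγ + ℓ² of 𝔽_q (the norm of γ + ℓζ from 𝔽_{q²} to 𝔽_q) is not a p-th power in 𝔽_q, then the polynomial X^m − (γ + ℓζ) is irreducible over 𝔽_{q²}. -/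
open Polynomial IntermediateField

universe u

theorem aux_irred {K : Type u} [Field K] {n : ℕ} (hn : n ≠ 0) {a : K}
    (ha : ∀ p : ℕ, p.Prime → p ∣ n → ∀ b : K, b ^ p ≠ a ∧ b ^ p ≠ -a) :
    Irreducible (X ^ n - C a) := by
  induction n using induction_on_primes generalizing K a with
  | zero => exact absurd rfl hn
  | one => simpa using irreducible_X_sub_C a
  | prime_mul p n hp IH =>
    rw [mul_comm]
    apply X_pow_mul_sub_C_irreducible
      (X_pow_sub_C_irreducible_of_prime hp (fun b => (ha p hp (dvd_mul_right _ _) b).1))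
    intro L _ _ x hx
    have hint : IsIntegral K x := not_not.mp fun h ↦ by
      simpa only [degree_zero, degree_X_pow_sub_C hp.pos,
        WithBot.natCast_ne_bot] using congr_arg degree (hx.symm.trans (dif_neg h))
    have hn' : n ≠ 0 := by rintro rfl; exact hn (mul_zero p)
    apply IH hn'
    intro q hq hqn b
    have hNgen : Algebra.norm K (AdjoinSimple.gen K x) = (-1) ^ p * (-a) := by
      rw [← adjoin.powerBasis_gen hint, Algebra.PowerBasis.norm_gen_eq_coeff_zero_minpoly]
      simp [minpoly_gen, hx, hp.ne_zero.symm]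
    have hfin : Module.finrank K K⟮x⟯ = p := by
      rw [adjoin.finrank hint, hx, natDegree_X_pow_sub_C]
    have hNneg : Algebra.norm K (-(AdjoinSimple.gen K x)) = -a := by
      have : (-(AdjoinSimple.gen K x)) = algebraMap K K⟮x⟯ (-1) * AdjoinSimple.gen K x := by
        simp
      rw [this, map_mul, Algebra.norm_algebraMap, hNgen, hfin, ← mul_assoc, ← pow_add]
      have hev : Even (p + p) := ⟨p, rfl⟩
      rw [hev.neg_one_pow, one_mul]
    constructor
    · intro hb
      have hN := congrArg (Algebra.norm K) hb
      rw [map_pow, hNgen] at hN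
      rcases Nat.even_or_odd p with hep | hop
      · rw [hep.neg_one_pow, one_mul] at hN
        exact (ha q hq (hqn.mul_left p) _).2 hN
      · rw [hop.neg_one_pow, neg_one_mul, neg_neg] at hN
        exact (ha q hq (hqn.mul_left p) _).1 hN
    · intro hb
      have hN := congrArg (Algebra.norm K) hb
      rw [map_pow, hNneg] at hN
      exact (ha q hq (hqn.mul_left p) _).2 hN

theorem fix_mem {F E : Type*} [Field F] [Field E] [Algebra F E] [Fintype F] [Fintype E]
    {q : ℕ} (hq2 : 2 ≤ q) (hcardF : Fintype.card F = q) (x : E) (hx : x ^ q = x) :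
    ∃ c : F, algebraMap F E c = x := by
  classical
  set T : Finset E := Finset.univ.image (algebraMap F E) with hTdef
  set S : Finset E := Finset.univ.filter (fun y : E => y ^ q = y) with hSdef
  have hTS : T ⊆ S := by
    intro y hy
    rw [hTdef, Finset.mem_image] at hy
    obtain ⟨c, -, rfl⟩ := hy
    rw [hSdef, Finset.mem_filter]
    refine ⟨Finset.mem_univ _, ?_⟩
    rw [← map_pow]
    congr 1
    calc c ^ q = c ^ Fintype.card F := by rw [hcardF]
    _ = c := FiniteField.pow_card c
  have hT : T.card = q := by
    rw [hTdef, Finset.card_image_of_injective _ (algebraMap F E).injective,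
      Finset.card_univ, hcardF]
  have hP : (X ^ q - X : E[X]) ≠ 0 := by
    intro h
    have := congrArg (fun p : E[X] => p.coeff q) h
    simp only [coeff_sub, coeff_X_pow, if_pos rfl, coeff_X,
      if_neg (by omega : ¬ (1 = q)), coeff_zero] at this
    simpa using this
  have hS : S.card ≤ q := by
    have hsub : S ⊆ (X ^ q - X : E[X]).roots.toFinset := by
      intro y hy
      rw [hSdef, Finset.mem_filter] at hy
      rw [Multiset.mem_toFinset, mem_roots hP]
      simp [IsRoot, sub_eq_zero, hy.2]
    calc S.card ≤ (X ^ q - X : E[X]).roots.toFinset.card := Finset.card_le_card hsub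
    _ ≤ Multiset.card (X ^ q - X : E[X]).roots := Multiset.toFinset_card_le _
    _ ≤ (X ^ q - X : E[X]).natDegree := card_roots' _
    _ ≤ max (X ^ q : E[X]).natDegree (X : E[X]).natDegree := natDegree_sub_le _ _
    _ ≤ q := by simp; omega
  have hST : T = S := Finset.eq_of_subset_of_card_le hTS (by omega)
  have hxS : x ∈ S := by rw [hSdef, Finset.mem_filter]; exact ⟨Finset.mem_univ _, hx⟩
  rw [← hST, hTdef, Finset.mem_image] at hxS
  obtain ⟨c, -, hc⟩ := hxS
  exact ⟨c, hc⟩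

/-- Let `q` be an odd prime power, `ℓ` an odd prime with `ℓ ∤ q` and `q ≡ -1 (mod ℓ)`,
`ζ` a primitive `ℓ`-th root of unity in the quadratic extension `E = 𝔽_{q²}` of `F = 𝔽_q`,
and `ω = ζ + ζ⁻¹ ∈ 𝔽_q`.  Let `m > 1` and `γ ∈ 𝔽_q`.  If for every prime `p ∣ m` the norm
`γ² + ℓωγ + ℓ²` of `γ + ℓζ` is not a `p`-th power in `𝔽_q`, then `X^m - (γ + ℓζ)` is
irreducible over `𝔽_{q²}`. -/
theorem stmt_6 (q ℓ : ℕ) (hqodd : Odd q) (hq : IsPrimePow q)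
    (hℓ : ℓ.Prime) (hℓodd : Odd ℓ) (hℓq : ¬ ℓ ∣ q) (hcong : ℓ ∣ q + 1)
    (F E : Type*) [Field F] [Field E] [Algebra F E] [Fintype F] [Fintype E]
    (hcardF : Fintype.card F = q) (hcardE : Fintype.card E = q ^ 2)
    (ζ : E) (hζ : IsPrimitiveRoot ζ ℓ)
    (ω : F) (hω : algebraMap F E ω = ζ + ζ⁻¹)
    (m : ℕ) (hm : 1 < m) (γ : F)
    (hnorm : ∀ p : ℕ, p.Prime → p ∣ m →
      ∀ b : F, b ^ p ≠ γ ^ 2 + (ℓ : F) * ω * γ + (ℓ : F) ^ 2) :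
    Irreducible (Polynomial.X ^ m -
      Polynomial.C (algebraMap F E γ + (ℓ : E) * ζ)) := by
  classical
  have hq2 : 2 ≤ q := hq.two_le
  set g : E := algebraMap F E γ with hg
  set a : E := g + (ℓ : E) * ζ with hadef
  -- characteristic of E
  obtain ⟨p0, k, hp0, hk, hpk⟩ := hq
  have hp0nat : p0.Prime := Nat.prime_iff.mpr hp0
  haveI := Fact.mk hp0nat
  haveI : CharP E (ringChar E) := ringChar.charP E
  obtain ⟨n2, hrp, hcard2⟩ := FiniteField.card E (ringChar E)
  have hre : ringChar E = p0 := by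
    have h1 : p0 ∣ ringChar E ^ (n2 : ℕ) := by
      rw [← hcard2, hcardE, ← hpk, pow_two]
      exact dvd_mul_of_dvd_left (dvd_pow_self p0 hk.ne') _
    exact ((Nat.prime_dvd_prime_iff_eq hp0nat hrp).mp (hp0nat.dvd_of_dvd_pow h1)).symm
  haveI : CharP E p0 := hre ▸ ringChar.charP E
  have hadd : ∀ x y : E, (x + y) ^ q = x ^ q + y ^ q := by
    intro x y; rw [← hpk]; exact add_pow_char_pow x y p0 k
  have hγq : g ^ q = g := by
    rw [hg, ← map_pow]
    congr 1
    calc γ ^ q = γ ^ Fintype.card F := by rw [hcardF]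
    _ = γ := FiniteField.pow_card γ
  have hlE : ((ℓ : E)) = algebraMap F E (ℓ : F) := by rw [map_natCast]
  have hlq : ((ℓ : E)) ^ q = (ℓ : E) := by
    rw [hlE, ← map_pow]
    congr 1
    calc (ℓ : F) ^ q = (ℓ : F) ^ Fintype.card F := by rw [hcardF]
    _ = (ℓ : F) := FiniteField.pow_card _
  have hζ0 : ζ ≠ 0 := hζ.ne_zero hℓ.ne_zero
  have hζq : ζ ^ q = ζ⁻¹ := by
    refine eq_inv_of_mul_eq_one_left ?_
    rw [← pow_succ]
    obtain ⟨t, ht⟩ := hcong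
    rw [ht, pow_mul, hζ.pow_eq_one, one_pow]
  have haq : a ^ q = g + (ℓ : E) * ζ⁻¹ := by
    rw [hadef, hadd, mul_pow, hγq, hlq, hζq]
  have hprod : a * a ^ q = algebraMap F E (γ ^ 2 + (ℓ : F) * ω * γ + (ℓ : F) ^ 2) := by
    have hz : ζ * ζ⁻¹ = 1 := mul_inv_cancel₀ hζ0
    rw [haq, hadef]
    simp only [map_add, map_mul, map_pow, map_natCast, hω, ← hg]
    linear_combination (ℓ : E) ^ 2 * hz
  have key : ∀ p : ℕ, p.Prime → p ∣ m → ∀ b : E, b ^ p ≠ a ∧ b ^ p ≠ -a := by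
    intro p hp hpm b
    have H : ∀ b : E, b ^ p = a ∨ b ^ p = -a → False := by
      intro b hb
      have hba : b ^ p * (b ^ p) ^ q = a * a ^ q := by
        rcases hb with hb | hb <;> rw [hb]
        rw [hqodd.neg_pow]; ring
      have hν : (b * b ^ q) ^ q = b * b ^ q := by
        have hb2 : (b ^ q) ^ q = b := by
          rw [← pow_mul, ← pow_two]
          calc b ^ q ^ 2 = b ^ Fintype.card E := by rw [hcardE]
          _ = b := FiniteField.pow_card b
        rw [mul_pow, hb2]; ring
      obtain ⟨c, hc⟩ := fix_mem hq2 hcardF (b * b ^ q) hν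
      have hcp : algebraMap F E (c ^ p) =
          algebraMap F E (γ ^ 2 + (ℓ : F) * ω * γ + (ℓ : F) ^ 2) := by
        have hpb : (b * b ^ q) ^ p = b ^ p * (b ^ p) ^ q := by
          rw [mul_pow, ← pow_mul, ← pow_mul, mul_comm q p]
        rw [map_pow, hc, hpb, hba, hprod]
      exact hnorm p hp hpm c ((algebraMap F E).injective hcp)
    exact ⟨fun h => H b (Or.inl h), fun h => H b (Or.inr h)⟩
  exact aux_irred (by omega) key
end

section
/- Let m > 1 be an integer with exactly t distinct prime divisors and square-free part (radical) m₀, let q be an odd prime power with m₀ dividing q − 1, and let d be a nonzero element of 𝔽_q. Let T = {η ∈ 𝔽_q : η is a square in 𝔽_q and, for every prime p dividing m, η + d is not a p-th power in 𝔽_q}. Then |#T − (q/2)·(φ(m₀)/m₀)| ≤ 2^{t−1}·√q + 2^{t+1}, where φ is Euler's totient function. -/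
open Finset
open scoped Classical

section Aux

variable {F : Type*} [Field F] [Fintype F]

lemma aux_norm_char (χ : MulChar F ℂ) {x : F} (hx : x ≠ 0) : ‖χ x‖ = 1 := by
  have h1 : (χ x) ^ (Fintype.card F - 1) = 1 := by
    rw [← map_pow, FiniteField.pow_card_sub_one_eq_one x hx, map_one]
  refine Complex.norm_eq_one_of_pow_eq_one h1 ?_
  have : 1 < Fintype.card F := Fintype.one_lt_card
  omega

lemma aux_conj_char (χ : MulChar F ℂ) (x : F) : (starRingEnd ℂ) (χ x) = χ⁻¹ x := by
  rcases eq_or_ne x 0 with rfl | hx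
  · rw [MulChar.map_nonunit χ (by simp), MulChar.map_nonunit χ⁻¹ (by simp), map_zero]
  · rw [MulChar.inv_apply_eq_inv' χ x, ← Complex.inv_eq_conj (aux_norm_char χ hx)]

lemma aux_conj_jacobi (χ ψ : MulChar F ℂ) :
    (starRingEnd ℂ) (jacobiSum χ ψ) = jacobiSum χ⁻¹ ψ⁻¹ := by
  unfold jacobiSum
  rw [map_sum]
  exact Finset.sum_congr rfl fun x _ => by rw [map_mul, aux_conj_char, aux_conj_char]

lemma aux_jacobi_norm {χ ψ : MulChar F ℂ} (hχ : χ ≠ 1) (hψ : ψ ≠ 1) (hχψ : χ * ψ ≠ 1) :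
    ‖jacobiSum χ ψ‖ = Real.sqrt (Fintype.card F) := by
  have hchar : ringChar ℂ ≠ ringChar F := by
    rw [ringChar.eq_zero]
    exact fun h => CharP.char_ne_zero_of_finite F (ringChar F) h.symm
  have h := jacobiSum_mul_jacobiSum_inv hchar hχ hψ hχψ
  rw [← aux_conj_jacobi, Complex.mul_conj] at h
  have h2 : Complex.normSq (jacobiSum χ ψ) = (Fintype.card F : ℝ) := by
    exact_mod_cast h
  rw [Complex.norm_def, h2]

lemma aux_one_apply' (x : F) : (1 : MulChar F ℂ) x = if x = 0 then 0 else 1 := by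
  rcases eq_or_ne x 0 with rfl | hx
  · simp [MulChar.map_nonunit (1 : MulChar F ℂ) (by simp : ¬ IsUnit (0:F))]
  · simp [hx, MulChar.one_apply (isUnit_iff_ne_zero.mpr hx)]

lemma aux_translate (α β : MulChar F ℂ) {d : F} (hd : d ≠ 0) :
    ∑ η : F, α η * β (η + d) = α (-d) * β d * jacobiSum α β := by
  rw [jacobiSum, Finset.mul_sum]
  refine (Fintype.sum_bijective (fun x : F => -d * x)
    (Finite.injective_iff_bijective.mp (mul_right_injective₀ (neg_ne_zero.mpr hd))) _ _
    fun x => ?_).symm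
  have h1 : -d * x + d = d * (1 - x) := by ring
  have h2 : (-d) * x = -d * x := rfl
  simp only [h1, map_mul]
  ring

-- T(α,β) bound for both nontrivial
lemma aux_T_bound {α β : MulChar F ℂ} (hα : α ≠ 1) (hβ : β ≠ 1) {d : F} (hd : d ≠ 0) :
    ‖∑ η : F, α η * β (η + d)‖ ≤ Real.sqrt (Fintype.card F) := by
  rw [aux_translate α β hd]
  rw [norm_mul, norm_mul, aux_norm_char α (neg_ne_zero.mpr hd), aux_norm_char β hd,
    one_mul, one_mul]
  rcases eq_or_ne (α * β) 1 with h1 | h1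
  · have hβα : β = α⁻¹ := by
      rw [eq_inv_iff_mul_eq_one, mul_comm]; exact h1
    rw [hβα, jacobiSum_nontrivial_inv hα, norm_neg, aux_norm_char α (by simp : (-1:F) ≠ 0)]
    rw [show (1:ℝ) = Real.sqrt 1 by simp]
    exact Real.sqrt_le_sqrt (by exact_mod_cast Fintype.card_pos)
  · exact le_of_eq (aux_jacobi_norm hα hβ h1)

-- T(α,1) for α ≠ 1
lemma aux_T_right_one {α : MulChar F ℂ} (hα : α ≠ 1) (d : F) :
    ∑ η : F, α η * (1 : MulChar F ℂ) (η + d) = - α (-d) := by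
  have key : ∀ η : F, α η * (1 : MulChar F ℂ) (η + d) =
      α η - (if η = -d then α η else 0) := by
    intro η
    rcases eq_or_ne η (-d) with rfl | hη
    · simp [aux_one_apply']
    · have : η + d ≠ 0 := fun h => hη (by linear_combination h)
      simp [aux_one_apply', this, hη]
  simp only [key, Finset.sum_sub_distrib, MulChar.sum_eq_zero_of_ne_one hα,
    Finset.sum_ite_eq' Finset.univ (-d) (fun η => α η), Finset.mem_univ, if_true]
  ring

-- T(1,β) for β ≠ 1
lemma aux_T_left_one {β : MulChar F ℂ} (hβ : β ≠ 1) (d : F) :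
    ∑ η : F, (1 : MulChar F ℂ) η * β (η + d) = - β d := by
  have key : ∀ η : F, (1 : MulChar F ℂ) η * β (η + d) =
      β (η + d) - (if η = 0 then β d else 0) := by
    intro η
    rcases eq_or_ne η 0 with rfl | hη
    · simp [aux_one_apply']
    · simp [aux_one_apply', hη]
  have hshift : ∑ η : F, β (η + d) = ∑ x : F, β x :=
    Fintype.sum_bijective (fun η : F => η + d) (Finite.injective_iff_bijective.mp (add_left_injective d)) _ _ fun _ => rfl
  simp only [key, Finset.sum_sub_distrib, hshift, MulChar.sum_eq_zero_of_ne_one hβ,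
    Finset.sum_ite_eq' Finset.univ (0:F) (fun _ => β d), Finset.mem_univ, if_true]
  ring

-- T(1,1)
lemma aux_T_one_one {d : F} (hd : d ≠ 0) :
    ∑ η : F, (1 : MulChar F ℂ) η * (1 : MulChar F ℂ) (η + d) = (Fintype.card F : ℂ) - 2 := by
  have key : ∀ η : F, (1 : MulChar F ℂ) η * (1 : MulChar F ℂ) (η + d) =
      1 - (if η = 0 then 1 else 0) - (if η = -d then 1 else 0) := by
    intro η
    rcases eq_or_ne η 0 with rfl | h0
    · simp [aux_one_apply', hd, neg_ne_zero.mpr hd, (neg_ne_zero.mpr hd).symm]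
    · rcases eq_or_ne η (-d) with rfl | h1
      · simp [aux_one_apply', h0, neg_eq_zero]
      · have : η + d ≠ 0 := fun h => h1 (by linear_combination h)
        simp [aux_one_apply', h0, this, h1]
  simp only [key, Finset.sum_sub_distrib, Finset.sum_const, Finset.card_univ,
    Finset.sum_ite_eq' Finset.univ (0:F) (fun _ => (1:ℂ)),
    Finset.sum_ite_eq' Finset.univ (-d) (fun _ => (1:ℂ)), Finset.mem_univ, if_true]
  ring

-- existence of a generating, faithful character
lemma aux_exists_xi (F : Type*) [Field F] [Fintype F] :
    ∃ ξ : MulChar F ℂ, orderOf ξ = Fintype.card F - 1 ∧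
      (∀ χ : MulChar F ℂ, ∃ k : ℕ, ξ ^ k = χ) ∧
      (∀ x : F, x ≠ 0 → ξ x = 1 → x = 1) := by
  haveI : NeZero ((Monoid.exponent Fˣ : ℂ)) :=
    ⟨Nat.cast_ne_zero.mpr Monoid.exponent_ne_zero_of_finite⟩
  obtain ⟨ν⟩ := MulChar.mulEquiv_units F ℂ
  haveI : IsCyclic (MulChar F ℂ) := isCyclic_of_surjective ν.symm ν.symm.surjective
  obtain ⟨ξ, hξ⟩ := IsCyclic.exists_ofOrder_eq_natCard (α := MulChar F ℂ)
  have hcard : Nat.card (MulChar F ℂ) = Fintype.card F - 1 := by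
    rw [MulChar.card_eq_card_units_of_hasEnoughRootsOfUnity F ℂ, Nat.card_eq_fintype_card,
      Fintype.card_units]
  have htop : Subgroup.zpowers ξ = ⊤ :=
    Subgroup.eq_top_of_card_eq _ (by rw [Nat.card_zpowers, hξ])
  have hgen : ∀ χ : MulChar F ℂ, ∃ k : ℕ, ξ ^ k = χ := by
    intro χ
    have : χ ∈ Submonoid.powers ξ := by
      rw [mem_powers_iff_mem_zpowers, htop]; trivial
    obtain ⟨k, hk⟩ := this
    exact ⟨k, hk⟩
  refine ⟨ξ, hξ.trans hcard, hgen, fun x hx hx1 => ?_⟩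
  by_contra hne
  obtain ⟨χ, hχ⟩ := MulChar.exists_apply_ne_one_of_hasEnoughRootsOfUnity F ℂ (a := x) hne
  obtain ⟨k, rfl⟩ := hgen χ
  have hu : IsUnit x := isUnit_iff_ne_zero.mpr hx
  rw [← hu.unit_spec, MulChar.pow_apply_coe, hu.unit_spec, hx1, one_pow] at hχ
  exact hχ rfl

-- x is an e-th power iff x = 0 or x^((q-1)/e) = 1
lemma aux_pow_iff {e : ℕ} (he : e ≠ 0) (hdvd : e ∣ Fintype.card F - 1) (x : F) :
    (∃ c : F, c ^ e = x) ↔ (x = 0 ∨ x ^ ((Fintype.card F - 1) / e) = 1) := by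
  set n := Fintype.card F - 1 with hn
  have hn0 : n ≠ 0 := by
    have : 1 < Fintype.card F := Fintype.one_lt_card
    omega
  constructor
  · rintro ⟨c, rfl⟩
    rcases eq_or_ne c 0 with rfl | hc
    · left; exact zero_pow he
    · right
      rw [← pow_mul, Nat.mul_div_cancel' hdvd]
      exact FiniteField.pow_card_sub_one_eq_one c hc
  · rintro (rfl | hx1)
    · exact ⟨0, zero_pow he⟩
    · have hx : x ≠ 0 := by
        rintro rfl
        have hpos : 0 < n / e := Nat.div_pos (Nat.le_of_dvd (Nat.pos_of_ne_zero hn0) hdvd)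
          (Nat.pos_of_ne_zero he)
        rw [zero_pow (Nat.pos_iff_ne_zero.mp hpos)] at hx1
        exact one_ne_zero hx1.symm
      set u : Fˣ := Units.mk0 x hx with hu
      obtain ⟨g, hg⟩ := IsCyclic.exists_ofOrder_eq_natCard (α := Fˣ)
      have hgcard : orderOf g = n := by
        rw [hg, Nat.card_eq_fintype_card, Fintype.card_units]
      have htop : Subgroup.zpowers g = ⊤ :=
        Subgroup.eq_top_of_card_eq _ (by rw [Nat.card_zpowers, hg])
      have hugen : u ∈ Submonoid.powers g := by
        rw [mem_powers_iff_mem_zpowers, htop]; trivial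
      obtain ⟨k, hk⟩ := hugen
      have hupow : u ^ (n / e) = 1 := by
        ext
        push_cast
        exact hx1
      rw [← hk, ← pow_mul] at hupow
      have hord : n ∣ k * (n / e) := by
        have := orderOf_dvd_of_pow_eq_one hupow
        rwa [hgcard] at this
      have hne' : 0 < n / e := Nat.div_pos (Nat.le_of_dvd (Nat.pos_of_ne_zero hn0) hdvd)
        (Nat.pos_of_ne_zero he)
      have hek : e ∣ k := by
        have h1 : e * (n / e) ∣ k * (n / e) := by
          rwa [Nat.mul_div_cancel' hdvd]
        exact (Nat.mul_dvd_mul_iff_right hne').mp h1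
      obtain ⟨j, rfl⟩ := hek
      refine ⟨((g ^ j : Fˣ) : F), ?_⟩
      have : (g ^ j) ^ e = u := by rw [← hk, ← pow_mul, mul_comm j e]
      rw [← Units.val_pow_eq_pow_val, this, hu]
      rfl

noncomputable def indPow (F : Type*) [Field F] [Fintype F] (e : ℕ) (x : F) : ℂ :=
  if ∃ c : F, c ^ e = x then 1 else 0

lemma indPow_mul_prime_set {S : Finset ℕ} (hS : ∀ p ∈ S, p.Prime)
    (hdvd : (∏ p ∈ S, p) ∣ Fintype.card F - 1) (x : F) :
    ∏ p ∈ S, indPow F p x = indPow F (∏ p ∈ S, p) x := by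
  unfold indPow
  rw [Finset.prod_boole]
  have hn0 : Fintype.card F - 1 ≠ 0 := by
    have : 1 < Fintype.card F := Fintype.one_lt_card
    omega
  have hSpos : ∀ p ∈ S, p ≠ 0 := fun p hp => (hS p hp).ne_zero
  have hprod0 : (∏ p ∈ S, p) ≠ 0 := Finset.prod_ne_zero_iff.mpr hSpos
  congr 1
  apply propext
  constructor
  · -- each prime power → product power
    intro h
    rcases eq_or_ne x 0 with rfl | hx
    · exact ⟨0, zero_pow hprod0⟩
    rw [aux_pow_iff hprod0 hdvd]
    right
    -- orderOf of unit u divides (q-1)/p for all p ∈ S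
    set n := Fintype.card F - 1 with hn
    set u : Fˣ := Units.mk0 x hx with hu
    have hordn : orderOf u ∣ n := by
      rw [hn, ← Fintype.card_units (α := F), ← Nat.card_eq_fintype_card]
      exact orderOf_dvd_natCard u
    have key : ∀ p ∈ S, p ∣ n / orderOf u := by
      intro p hp
      have hpn : p ∣ n := dvd_trans (Finset.dvd_prod_of_mem _ hp) hdvd
      have h1 : x ^ (n / p) = 1 := by
        rcases (aux_pow_iff (hS p hp).ne_zero hpn x).mp (h p hp) with h0 | h1
        · exact absurd h0 hx
        · exact h1
      have hu1 : u ^ (n / p) = 1 := by ext; push_cast; exact h1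
      have h2 : orderOf u ∣ n / p := orderOf_dvd_of_pow_eq_one hu1
      -- orderOf u ∣ n / p ↔ orderOf u * p ∣ n ↔ p ∣ n / orderOf u
      rw [Nat.dvd_div_iff_mul_dvd hpn] at h2
      rwa [Nat.dvd_div_iff_mul_dvd hordn, mul_comm]
    have hSn : (∏ p ∈ S, p) ∣ n / orderOf u :=
      Finset.prod_primes_dvd _ (fun p hp => (hS p hp).prime) key
    -- then x^(n/∏S) = 1
    have h3 : orderOf u ∣ n / ∏ p ∈ S, p := by
      rw [Nat.dvd_div_iff_mul_dvd hdvd, mul_comm, ← Nat.dvd_div_iff_mul_dvd hordn]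
      exact hSn
    have h4 : u ^ (n / ∏ p ∈ S, p) = 1 := orderOf_dvd_iff_pow_eq_one.mp h3
    have := congrArg (Units.val) h4
    push_cast at this
    exact this
  · rintro ⟨c, rfl⟩ p hp
    refine ⟨c ^ (∏ r ∈ S.erase p, r), ?_⟩
    rw [← pow_mul, mul_comm, ← Finset.mul_prod_erase S _ hp]

lemma indPow_char {ξ : MulChar F ℂ} (hξfaith : ∀ x : F, x ≠ 0 → ξ x = 1 → x = 1)
    {e : ℕ} (he : e ≠ 0) (hdvd : e ∣ Fintype.card F - 1) (x : F) :
    indPow F e x = (e : ℂ)⁻¹ * ∑ j ∈ Finset.range e, (ξ ^ (j * ((Fintype.card F - 1) / e))) x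
      + (if x = 0 then 1 else 0) := by
  set n := Fintype.card F - 1 with hn
  have hn0 : n ≠ 0 := by
    have : 1 < Fintype.card F := Fintype.one_lt_card
    omega
  rcases eq_or_ne x 0 with rfl | hx
  · have : ∀ j ∈ Finset.range e, (ξ ^ (j * (n / e))) (0:F) = 0 := fun j _ =>
      MulChar.map_nonunit _ (by simp)
    rw [Finset.sum_congr rfl this, Finset.sum_const, smul_zero, mul_zero, zero_add, if_pos rfl]
    unfold indPow
    rw [if_pos ⟨0, zero_pow he⟩]
  · have hu : IsUnit x := isUnit_iff_ne_zero.mpr hx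
    set z : ℂ := (ξ x) ^ (n / e) with hz
    have hterm : ∀ j, (ξ ^ (j * (n / e))) x = z ^ j := by
      intro j
      rw [← hu.unit_spec, MulChar.pow_apply_coe, hu.unit_spec, hz, ← pow_mul, mul_comm j]
    have hze : z ^ e = 1 := by
      rw [hz, ← pow_mul, Nat.div_mul_cancel hdvd, ← map_pow,
        FiniteField.pow_card_sub_one_eq_one x hx, map_one]
    have hxn : x ^ (n / e) ≠ 0 := pow_ne_zero _ hx
    have hzx : z = ξ (x ^ (n / e)) := by rw [map_pow]
    have hiff : (∃ c : F, c ^ e = x) ↔ z = 1 := by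
      rw [aux_pow_iff he hdvd x]
      constructor
      · rintro (h0 | h1)
        · exact absurd h0 hx
        · rw [hzx, h1, map_one]
      · intro hz1
        right
        exact hξfaith _ hxn (hzx ▸ hz1)
    simp only [Finset.sum_congr rfl (fun j _ => hterm j), if_neg hx, add_zero]
    unfold indPow
    rcases eq_or_ne z 1 with hz1 | hz1
    · rw [if_pos (hiff.mpr hz1), hz1]
      simp only [one_pow, Finset.sum_const, Finset.card_range, nsmul_eq_mul, mul_one]
      rw [inv_mul_cancel₀ (Nat.cast_ne_zero.mpr he)]
    · rw [if_neg (fun h => hz1 (hiff.mp h)), geom_sum_eq hz1, hze]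
      simp

lemma aux_estimate {ξ : MulChar F ℂ} (hξord : orderOf ξ = Fintype.card F - 1)
    (hξfaith : ∀ x : F, x ≠ 0 → ξ x = 1 → x = 1)
    (hodd : Odd (Fintype.card F))
    {e : ℕ} (he : e ≠ 0) (hdvd : e ∣ Fintype.card F - 1) {d : F} (hd : d ≠ 0) :
    ‖(∑ η : F, indPow F 2 η * indPow F e (η + d)) - (Fintype.card F : ℂ) / (2 * e)‖ ≤
      Real.sqrt (Fintype.card F) / 2 + 2 := by
  set q := Fintype.card F with hqdef
  have hq1 : 1 < q := Fintype.one_lt_card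
  have hq2 : q ≠ 2 := by rintro h; rw [h] at hodd; exact (by decide : ¬ Odd 2) hodd
  have hq3 : 3 ≤ q := by omega
  set n := q - 1 with hndef
  have hn0 : n ≠ 0 := by omega
  have hn2 : (2:ℕ) ∣ n := (Nat.Odd.sub_odd hodd odd_one).two_dvd
  have hept : 0 < n / e := Nat.div_pos (Nat.le_of_dvd (by omega) hdvd) (Nat.pos_of_ne_zero he)
  have hne1 : ∀ k : ℕ, 0 < k → k < n → ξ ^ k ≠ 1 := by
    intro k hk1 hk2 h
    have h2 := orderOf_dvd_of_pow_eq_one h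
    rw [hξord] at h2
    have := Nat.le_of_dvd hk1 h2
    omega
  set χ₂ : MulChar F ℂ := ξ ^ (n / 2) with hχ₂def
  have hχ₂ : χ₂ ≠ 1 := by
    apply hne1 <;> omega
  have hβ : ∀ j : ℕ, 0 < j → j < e → ξ ^ (j * (n / e)) ≠ 1 := by
    intro j hj hje
    apply hne1
    · exact Nat.mul_pos hj hept
    · calc j * (n / e) < e * (n / e) := (Nat.mul_lt_mul_right hept).mpr hje
        _ = n := Nat.mul_div_cancel' hdvd
  -- expansion of the square indicator
  have hind2 : ∀ y : F, indPow F 2 y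
      = 2⁻¹ * ((1 : MulChar F ℂ) y + χ₂ y) + (if y = 0 then 1 else 0) := by
    intro y
    rw [indPow_char hξfaith two_ne_zero hn2 y]
    congr 2
    rw [Finset.sum_range_succ, Finset.sum_range_one, zero_mul, pow_zero, one_mul]
  set V : ℕ → ℂ := fun j => ∑ η : F, indPow F 2 η * (ξ ^ (j * (n / e))) (η + d) with hVdef
  -- step A : decompose the main sum
  have hS : (∑ η : F, indPow F 2 η * indPow F e (η + d))
      = (e : ℂ)⁻¹ * ∑ j ∈ Finset.range e, V j + indPow F 2 (-d) := by
    have step1 : (∑ η : F, indPow F 2 η * indPow F e (η + d))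
        = ∑ η : F, ((∑ j ∈ Finset.range e, (e : ℂ)⁻¹ * (indPow F 2 η * (ξ ^ (j * (n / e))) (η + d)))
            + (if η = -d then indPow F 2 (-d) else 0)) := by
      refine Finset.sum_congr rfl fun η _ => ?_
      rw [indPow_char hξfaith he hdvd (η + d)]
      simp only [← hqdef, ← hndef]
      rcases eq_or_ne η (-d) with rfl | hη
      · rw [if_pos rfl, if_pos (by ring), mul_add, mul_one, Finset.mul_sum, Finset.mul_sum]
        congr 1
        exact Finset.sum_congr rfl fun j _ => by ring
      · have hne : η + d ≠ 0 := fun h => hη (by linear_combination h)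
        rw [if_neg hne, if_neg hη, add_zero, add_zero, Finset.mul_sum, Finset.mul_sum]
        exact Finset.sum_congr rfl fun j _ => by ring
    rw [step1, Finset.sum_add_distrib, Finset.sum_comm, Finset.sum_ite_eq' Finset.univ (-d),
      if_pos (Finset.mem_univ _), Finset.mul_sum]
    congr 1
    refine Finset.sum_congr rfl fun j _ => ?_
    show _ = (↑e)⁻¹ * ∑ η : F, indPow F 2 η * (ξ ^ (j * (n / e))) (η + d)
    rw [Finset.mul_sum]
  -- step B : values of V j
  have hVsplit : ∀ j : ℕ, V j = 2⁻¹ * ((∑ η : F, (1 : MulChar F ℂ) η * (ξ ^ (j * (n / e))) (η + d))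
      + (∑ η : F, χ₂ η * (ξ ^ (j * (n / e))) (η + d))) + (ξ ^ (j * (n / e))) d := by
    intro j
    show (∑ η : F, indPow F 2 η * (ξ ^ (j * (n / e))) (η + d)) = _
    have step : ∀ η : F, indPow F 2 η * (ξ ^ (j * (n / e))) (η + d)
        = 2⁻¹ * ((1 : MulChar F ℂ) η * (ξ ^ (j * (n / e))) (η + d)
            + χ₂ η * (ξ ^ (j * (n / e))) (η + d))
          + (if η = 0 then (ξ ^ (j * (n / e))) (0 + d) else 0) := by
      intro η
      rw [hind2 η]
      rcases eq_or_ne η 0 with rfl | hη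
      · split_ifs with h
        · ring
        · exact absurd rfl h
      · split_ifs with h
        · exact absurd h hη
        · ring
    rw [Finset.sum_congr rfl fun η _ => step η, Finset.sum_add_distrib,
      Finset.sum_ite_eq' Finset.univ (0 : F), if_pos (Finset.mem_univ _), zero_add,
      ← Finset.mul_sum, Finset.sum_add_distrib]
  have hβ0 : (ξ ^ (0 * (n / e))) = (1 : MulChar F ℂ) := by rw [zero_mul, pow_zero]
  have hV0 : V 0 - (q : ℂ) / 2 = - χ₂ (-d) * 2⁻¹ := by
    rw [hVsplit 0, hβ0, aux_T_one_one hd, aux_T_right_one hχ₂ d,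
      MulChar.one_apply (isUnit_iff_ne_zero.mpr hd)]
    rw [← hqdef]
    ring
  have hV0n : ‖V 0 - (q : ℂ) / 2‖ ≤ 2⁻¹ := by
    rw [hV0, norm_mul, norm_neg, aux_norm_char χ₂ (neg_ne_zero.mpr hd), one_mul]
    simp
  have hVjn : ∀ j ∈ (Finset.range e).erase 0, ‖V j‖ ≤ Real.sqrt q / 2 + 2⁻¹ := by
    intro j hj
    have hj0 : j ≠ 0 := Finset.ne_of_mem_erase hj
    have hje : j < e := Finset.mem_range.mp (Finset.mem_of_mem_erase hj)
    have hβj : ξ ^ (j * (n / e)) ≠ 1 := hβ j (Nat.pos_of_ne_zero hj0) hje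
    have hform : V j = 2⁻¹ * (∑ η : F, χ₂ η * (ξ ^ (j * (n / e))) (η + d))
        + 2⁻¹ * (ξ ^ (j * (n / e))) d := by
      rw [hVsplit j, aux_T_left_one hβj d]; ring
    rw [hform]
    calc ‖_ + _‖ ≤ ‖(2⁻¹ : ℂ) * (∑ η : F, χ₂ η * (ξ ^ (j * (n / e))) (η + d))‖
          + ‖(2⁻¹ : ℂ) * (ξ ^ (j * (n / e))) d‖ := norm_add_le _ _
      _ ≤ 2⁻¹ * Real.sqrt q + 2⁻¹ * 1 := by
          rw [norm_mul, norm_mul]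
          have h2 : ‖(2⁻¹ : ℂ)‖ = 2⁻¹ := by norm_num
          rw [h2]
          gcongr
          · exact aux_T_bound hχ₂ hβj hd
          · rw [aux_norm_char _ hd]
      _ = Real.sqrt q / 2 + 2⁻¹ := by ring
  -- step C : assemble
  have hcast : ((e : ℂ)) ≠ 0 := Nat.cast_ne_zero.mpr he
  have h0mem : (0 : ℕ) ∈ Finset.range e := Finset.mem_range.mpr (Nat.pos_of_ne_zero he)
  have key : (∑ η : F, indPow F 2 η * indPow F e (η + d)) - (q : ℂ) / (2 * e)
      = (e : ℂ)⁻¹ * (V 0 - (q : ℂ) / 2) + (e : ℂ)⁻¹ * (∑ j ∈ (Finset.range e).erase 0, V j)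
        + indPow F 2 (-d) := by
    rw [hS, ← Finset.add_sum_erase _ V h0mem]
    field_simp
    ring
  rw [key]
  have hind2d : ‖indPow F 2 (-d)‖ ≤ 1 := by
    unfold indPow; split_ifs <;> simp
  have hepos : (1:ℝ) ≤ (e:ℝ) := by exact_mod_cast Nat.one_le_iff_ne_zero.mpr he
  have hie : (0:ℝ) < (e:ℝ)⁻¹ := by positivity
  have hsum : ‖∑ j ∈ (Finset.range e).erase 0, V j‖ ≤ ((e:ℝ) - 1) * (Real.sqrt q / 2 + 2⁻¹) := by
    calc ‖∑ j ∈ (Finset.range e).erase 0, V j‖ ≤ ∑ j ∈ (Finset.range e).erase 0, ‖V j‖ :=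
          norm_sum_le _ _
      _ ≤ ((Finset.range e).erase 0).card • (Real.sqrt q / 2 + 2⁻¹) :=
          Finset.sum_le_card_nsmul _ _ _ hVjn
      _ = ((e:ℝ) - 1) * (Real.sqrt q / 2 + 2⁻¹) := by
          rw [Finset.card_erase_of_mem h0mem, Finset.card_range, nsmul_eq_mul]
          congr 1
          have : 1 ≤ e := Nat.one_le_iff_ne_zero.mpr he
          push_cast [Nat.cast_sub this]
          ring
  have hnormi : ‖((e:ℂ))⁻¹‖ = (e:ℝ)⁻¹ := by
    rw [norm_inv, Complex.norm_natCast]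
  have hs0 : (0:ℝ) ≤ Real.sqrt q := Real.sqrt_nonneg _
  calc ‖_ + _ + _‖ ≤ ‖(e : ℂ)⁻¹ * (V 0 - (q : ℂ) / 2) + (e : ℂ)⁻¹ *
          (∑ j ∈ (Finset.range e).erase 0, V j)‖ + ‖indPow F 2 (-d)‖ := norm_add_le _ _
    _ ≤ ‖(e : ℂ)⁻¹ * (V 0 - (q : ℂ) / 2)‖ + ‖(e : ℂ)⁻¹ *
          (∑ j ∈ (Finset.range e).erase 0, V j)‖ + ‖indPow F 2 (-d)‖ := by
        gcongr; exact norm_add_le _ _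
    _ ≤ (e:ℝ)⁻¹ * 2⁻¹ + (e:ℝ)⁻¹ * (((e:ℝ) - 1) * (Real.sqrt q / 2 + 2⁻¹)) + 1 := by
        rw [norm_mul, norm_mul, hnormi]
        gcongr <;> first | exact hV0n | exact hsum | exact hind2d
    _ ≤ Real.sqrt q / 2 + 2 := by
        have h1 : (e:ℝ)⁻¹ * ((e:ℝ) - 1) = 1 - (e:ℝ)⁻¹ := by
          field_simp
        have h2 : (e:ℝ)⁻¹ * (((e:ℝ) - 1) * (Real.sqrt q / 2 + 2⁻¹))
            = (1 - (e:ℝ)⁻¹) * (Real.sqrt q / 2 + 2⁻¹) := by rw [← mul_assoc, h1]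
        rw [h2]
        have h3 : (1 - (e:ℝ)⁻¹) * (Real.sqrt q / 2 + 2⁻¹) ≤ 1 * (Real.sqrt q / 2 + 2⁻¹) := by
          apply mul_le_mul_of_nonneg_right _ (by positivity)
          linarith
        have h5 : (e:ℝ)⁻¹ ≤ 1 := by
          rw [inv_le_one_iff₀]
          right
          exact hepos
        have h4 : (e:ℝ)⁻¹ * 2⁻¹ ≤ 2⁻¹ := by nlinarith
        nlinarith

end Aux

/-- Let `m > 1` have exactly `t` distinct prime divisors and radical `m₀`, let `q` be an
odd prime power with `m₀ ∣ q - 1`, and `d ∈ 𝔽_q` nonzero.  Let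
`T = {η ∈ 𝔽_q : η is a square and for every prime p ∣ m, η + d is not a p-th power}`.
Then `|#T - (q/2)(φ(m₀)/m₀)| ≤ 2^(t-1) √q + 2^(t+1)`. -/
theorem stmt_9 (m : ℕ) (hm : 1 < m) (q : ℕ) (hqodd : Odd q) (hq : IsPrimePow q)
    (hdvd : (∏ p ∈ m.primeFactors, p) ∣ q - 1)
    (F : Type*) [Field F] [Fintype F] (hcard : Fintype.card F = q)
    (d : F) (hd : d ≠ 0) :
    |(Nat.card {η : F // (∃ b : F, b ^ 2 = η) ∧
        ∀ p : ℕ, p.Prime → p ∣ m → ∀ b : F, b ^ p ≠ η + d} : ℝ)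
      - ((q : ℝ) / 2) *
          ((Nat.totient (∏ p ∈ m.primeFactors, p) : ℝ) / ((∏ p ∈ m.primeFactors, p : ℕ) : ℝ))|
      ≤ (2 : ℝ) ^ (m.primeFactors.card - 1) * Real.sqrt q
        + (2 : ℝ) ^ (m.primeFactors.card + 1) := by
  subst hcard
  set q := Fintype.card F with hqdef
  set P := m.primeFactors with hPdef
  set m₀ := ∏ p ∈ P, p with hm₀def
  set t := P.card with htdef
  have hPprime : ∀ p ∈ P, p.Prime := fun p hp => Nat.prime_of_mem_primeFactors hp
  have hPne : P.Nonempty := Nat.nonempty_primeFactors.mpr hm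
  have ht1 : 1 ≤ t := Finset.card_pos.mpr hPne
  have hm₀0 : m₀ ≠ 0 := Finset.prod_ne_zero_iff.mpr fun p hp => (hPprime p hp).ne_zero
  obtain ⟨ξ, hξord, -, hξfaith⟩ := aux_exists_xi F
  -- the counting condition
  set cond : F → Prop := fun η => (∃ b : F, b ^ 2 = η) ∧
      ∀ p : ℕ, p.Prime → p ∣ m → ∀ b : F, b ^ p ≠ η + d with hconddef
  -- step 1 : the count as a complex sum
  have hcnt : ((Nat.card {η : F // cond η} : ℝ) : ℂ)
      = ∑ η : F, indPow F 2 η * ∏ p ∈ P, (1 - indPow F p (η + d)) := by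
    have h1 : Nat.card {η : F // cond η} = (Finset.univ.filter cond).card := by
      rw [Nat.card_eq_fintype_card, Fintype.card_subtype]
    rw [h1]
    rw [show (((Finset.univ.filter cond).card : ℝ) : ℂ)
        = ((Finset.univ.filter cond).card : ℂ) by push_cast; ring]
    rw [← Finset.sum_boole]
    refine Finset.sum_congr rfl fun η _ => ?_
    have h2 : ∀ p : ℕ, (1 : ℂ) - indPow F p (η + d)
        = if ¬ ∃ c : F, c ^ p = η + d then 1 else 0 := by
      intro p
      unfold indPow
      split_ifs with h h' h' <;> simp_all
    rw [Finset.prod_congr rfl fun p _ => h2 p, Finset.prod_boole]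
    unfold indPow
    rcases Classical.em (cond η) with hc | hc
    · rw [if_pos hc, if_pos hc.1, if_pos, mul_one]
      intro p hp
      rw [not_exists]
      intro b hb
      exact hc.2 p (hPprime p hp) (Nat.dvd_of_mem_primeFactors hp) b hb
    · rw [if_neg hc]
      rcases Classical.em (∃ b : F, b ^ 2 = η) with h3 | h3
      · rw [if_pos h3]
        rw [if_neg, mul_zero]
        intro hall
        apply hc
        refine ⟨h3, fun p hp hpm b hb => ?_⟩
        have hpP : p ∈ P := Nat.mem_primeFactors.mpr ⟨hp, hpm, by omega⟩
        exact (not_exists.mp (hall p hpP)) b hb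
      · rw [if_neg h3, zero_mul]
  -- step 2 : expansion over subsets
  set W : Finset ℕ → ℂ := fun S => ∑ η : F, indPow F 2 η * indPow F (∏ p ∈ S, p) (η + d)
    with hWdef
  have hSdvd : ∀ S ∈ P.powerset, (∏ p ∈ S, p) ∣ q - 1 := by
    intro S hS
    exact dvd_trans (Finset.prod_dvd_prod_of_subset _ _ _ (Finset.mem_powerset.mp hS)) hdvd
  have hSne : ∀ S ∈ P.powerset, (∏ p ∈ S, p) ≠ 0 := by
    intro S hS
    exact Finset.prod_ne_zero_iff.mpr fun p hp =>
      (hPprime p (Finset.mem_powerset.mp hS hp)).ne_zero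
  have hexp : ((Nat.card {η : F // cond η} : ℝ) : ℂ)
      = ∑ S ∈ P.powerset, (-1 : ℂ) ^ S.card * W S := by
    rw [hcnt]
    have h1 : ∀ η : F, ∏ p ∈ P, (1 - indPow F p (η + d))
        = ∑ S ∈ P.powerset, (-1 : ℂ) ^ S.card * indPow F (∏ p ∈ S, p) (η + d) := by
      intro η
      have h2 : ∀ p : ℕ, (1 : ℂ) - indPow F p (η + d) = -indPow F p (η + d) + 1 := fun p => by
        ring
      rw [Finset.prod_congr rfl fun p _ => h2 p, Finset.prod_add]
      refine Finset.sum_congr rfl fun S hS => ?_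
      rw [Finset.prod_const_one, mul_one]
      have h3 : ∏ p ∈ S, (-indPow F p (η + d)) = (-1 : ℂ) ^ S.card * ∏ p ∈ S, indPow F p (η + d) := by
        rw [← Finset.prod_const (-1 : ℂ), ← Finset.prod_mul_distrib]
        exact Finset.prod_congr rfl fun p _ => by ring
      rw [h3, indPow_mul_prime_set (fun p hp => hPprime p (Finset.mem_powerset.mp hS hp))
        (hSdvd S hS)]
    rw [Finset.sum_congr rfl fun η _ => by rw [h1 η, Finset.mul_sum]]
    rw [Finset.sum_comm]
    refine Finset.sum_congr rfl fun S hS => ?_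
    show _ = (-1 : ℂ) ^ S.card * ∑ η : F, indPow F 2 η * indPow F (∏ p ∈ S, p) (η + d)
    rw [Finset.mul_sum]
    refine Finset.sum_congr rfl fun η _ => by ring
  -- step 3 : per-subset estimates
  have hest : ∀ S ∈ P.powerset,
      ‖W S - (q : ℂ) / (2 * ((∏ p ∈ S, p : ℕ) : ℂ))‖ ≤ Real.sqrt q / 2 + 2 :=
    fun S hS => aux_estimate hξord hξfaith hqodd (hSne S hS) (hSdvd S hS) hd
  -- step 4 : the main term
  have htot : ((m₀.totient : ℝ) / (m₀ : ℝ)) = ∏ p ∈ P, (1 - (p:ℝ)⁻¹) := by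
    have h0 := Nat.totient_eq_mul_prod_factors m₀
    rw [Nat.primeFactors_prod hPprime] at h0
    have h0' := congrArg (fun x : ℚ => (x : ℝ)) h0
    push_cast at h0'
    have hm₀R : (m₀:ℝ) ≠ 0 := Nat.cast_ne_zero.mpr hm₀0
    rw [h0', mul_div_cancel_left₀ _ hm₀R]
  have hmainR : (q : ℝ)/2 * ((m₀.totient : ℝ)/(m₀:ℝ))
      = ∑ S ∈ P.powerset, (-1:ℝ)^S.card * ((q:ℝ) / (2 * ((∏ p ∈ S, p : ℕ) : ℝ))) := by
    rw [htot]
    have hprod : ∏ p ∈ P, (1 - (p:ℝ)⁻¹)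
        = ∑ S ∈ P.powerset, (-1:ℝ)^S.card * (∏ p ∈ S, (p:ℝ))⁻¹ := by
      have hh : ∀ p ∈ P, (1 : ℝ) - (p:ℝ)⁻¹ = (-(p:ℝ)⁻¹) + 1 := fun p _ => by ring
      rw [Finset.prod_congr rfl hh, Finset.prod_add]
      refine Finset.sum_congr rfl fun S hS => ?_
      rw [Finset.prod_const_one, mul_one]
      have h3 : ∏ p ∈ S, (-(p:ℝ)⁻¹) = (-1:ℝ)^S.card * ∏ p ∈ S, (p:ℝ)⁻¹ := by
        rw [← Finset.prod_const (-1 : ℝ), ← Finset.prod_mul_distrib]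
        exact Finset.prod_congr rfl fun p _ => by ring
      rw [h3, ← Finset.prod_inv_distrib]
    rw [hprod, Finset.mul_sum]
    refine Finset.sum_congr rfl fun S hS => ?_
    have hy : ((∏ p ∈ S, p : ℕ) : ℝ) ≠ 0 := Nat.cast_ne_zero.mpr (hSne S hS)
    rw [show ((∏ p ∈ S, p : ℕ) : ℝ) = ∏ p ∈ S, (p:ℝ) from by push_cast; rfl] at hy ⊢
    field_simp
  -- step 5 : the difference as a sum
  have hdiff : ((Nat.card {η : F // cond η} : ℝ) : ℂ)
        - (((q : ℝ)/2 * ((m₀.totient : ℝ)/(m₀:ℝ)) : ℝ) : ℂ)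
      = ∑ S ∈ P.powerset, (-1:ℂ)^S.card
          * (W S - (q : ℂ) / (2 * ((∏ p ∈ S, p : ℕ) : ℂ))) := by
    rw [hexp]
    have hcast : (((q : ℝ)/2 * ((m₀.totient : ℝ)/(m₀:ℝ)) : ℝ) : ℂ)
        = ∑ S ∈ P.powerset, (-1:ℂ)^S.card * ((q:ℂ) / (2 * ((∏ p ∈ S, p : ℕ) : ℂ))) := by
      rw [hmainR]
      push_cast
      rfl
    rw [hcast, ← Finset.sum_sub_distrib]
    exact Finset.sum_congr rfl fun S hS => by ring
  -- step 6 : conclude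
  have habs : |(Nat.card {η : F // cond η} : ℝ)
        - (q : ℝ)/2 * ((m₀.totient : ℝ)/(m₀:ℝ))|
      ≤ (2:ℝ)^t * (Real.sqrt q / 2 + 2) := by
    have h1 : |(Nat.card {η : F // cond η} : ℝ) - (q : ℝ)/2 * ((m₀.totient : ℝ)/(m₀:ℝ))|
        = ‖((Nat.card {η : F // cond η} : ℝ) : ℂ)
            - (((q : ℝ)/2 * ((m₀.totient : ℝ)/(m₀:ℝ)) : ℝ) : ℂ)‖ := by
      rw [← Complex.ofReal_sub, Complex.norm_real, Real.norm_eq_abs]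
    rw [h1, hdiff]
    calc ‖∑ S ∈ P.powerset, (-1:ℂ)^S.card
            * (W S - (q : ℂ) / (2 * ((∏ p ∈ S, p : ℕ) : ℂ)))‖
        ≤ ∑ S ∈ P.powerset, ‖(-1:ℂ)^S.card
            * (W S - (q : ℂ) / (2 * ((∏ p ∈ S, p : ℕ) : ℂ)))‖ := norm_sum_le _ _
      _ ≤ ∑ S ∈ P.powerset, (Real.sqrt q / 2 + 2) := by
          refine Finset.sum_le_sum fun S hS => ?_
          rw [norm_mul, norm_pow, norm_neg, norm_one, one_pow, one_mul]
          exact hest S hS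
      _ = (2:ℝ)^t * (Real.sqrt q / 2 + 2) := by
          rw [Finset.sum_const, Finset.card_powerset, nsmul_eq_mul]
          push_cast
          ring
  have hrhs : (2:ℝ)^t * (Real.sqrt q / 2 + 2) = (2:ℝ)^(t-1) * Real.sqrt q + (2:ℝ)^(t+1) := by
    have h2t : (2:ℝ)^t = (2:ℝ)^(t-1) * 2 := by
      rw [← pow_succ]
      congr 1
      omega
    rw [pow_succ, h2t]
    ring
  rw [← hrhs]
  exact habs
end

section
/- Let m > 1 be an integer with exactly t distinct prime divisors and square-free part (radical) m₀, let q be an odd prime power with m₀ dividing q − 1, and let d be a nonzero element of 𝔽_q. Set C = 2^t·m₀/φ(m₀). If q > (C + 4)², then there exists λ ∈ 𝔽_q such that λ² + d is not a p-th power in 𝔽_q for any prime p dividing m. -/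
open Finset

section Helpers
open scoped Classical in
lemma expand_chars {F : Type*} [Field F] [Fintype F] (P : Finset ℕ) (hP : ∀ p ∈ P, p.Prime)
    (χs : ℕ → MulChar F ℂ) (hord : ∀ p ∈ P, orderOf (χs p) = p) :
    ∃ (ι : Type) (_ : Fintype ι) (χ : ι → MulChar F ℂ) (c : ι → ℂ),
      (∀ i, (χ i) ^ (∏ p ∈ P, p) = 1) ∧
      (∀ x : F, x ≠ 0 →
        ∏ p ∈ P, (1 - (p:ℂ)⁻¹ * ∑ j ∈ range p, (χs p x) ^ j) = ∑ i, c i * χ i x) ∧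
      (∑ i, if χ i = 1 then c i else 0) = ∏ p ∈ P, (1 - (p:ℂ)⁻¹) ∧
      (∑ i, ‖c i‖) ≤ ∏ p ∈ P, (2 * (1 - (p:ℝ)⁻¹)) := by
  induction P using Finset.cons_induction with
  | empty =>
      refine ⟨PUnit, inferInstance, fun _ => 1, fun _ => 1, fun i => ?_, fun x hx => ?_, ?_, ?_⟩
      · simp
      · simp [MulChar.one_apply hx.isUnit]
      · simp
      · simp
  | cons p Q hpQ ih =>
      obtain ⟨ι, hι, χ, c, hpow, hexp, htriv, habs⟩ :=
        ih (fun r hr => hP r (mem_cons_of_mem hr)) (fun r hr => hord r (mem_cons_of_mem hr))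
      have hp : p.Prime := hP p (mem_cons_self p Q)
      haveI : NeZero p := ⟨hp.ne_zero⟩
      have hplt : (1:ℝ) < p := by exact_mod_cast hp.one_lt
      have hχp : (χs p) ^ p = 1 := by
        have h0 := pow_orderOf_eq_one (χs p)
        rwa [hord p (mem_cons_self p Q)] at h0
      have hpM : ¬ p ∣ ∏ r ∈ Q, r := by
        intro hdvd
        obtain ⟨r, hr, hpr⟩ := hp.prime.exists_mem_finset_dvd hdvd
        have : p = r := ((Nat.prime_dvd_prime_iff_eq hp (hP r (mem_cons_of_mem hr))).mp hpr)
        exact hpQ (this ▸ hr)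
      set coef : Fin p → ℂ := fun j => if j = 0 then 1 - (p:ℂ)⁻¹ else -(p:ℂ)⁻¹ with hcoef
      have hiff : ∀ (i : ι) (j : Fin p), (χ i * (χs p) ^ (j:ℕ) = 1) ↔ (χ i = 1 ∧ j = 0) := by
        intro i j
        constructor
        · intro h
          have hM1 : (χ i * (χs p) ^ (j:ℕ)) ^ (∏ r ∈ Q, r) = 1 := by rw [h, one_pow]
          rw [mul_pow, hpow i, one_mul, ← pow_mul] at hM1
          have hdvd : p ∣ (j:ℕ) * ∏ r ∈ Q, r := by
            have h0 := orderOf_dvd_of_pow_eq_one hM1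
            rwa [hord p (mem_cons_self p Q)] at h0
          have hpj : p ∣ (j:ℕ) := ((Nat.Prime.dvd_mul hp).mp hdvd).resolve_right hpM
          have hj0 : j = 0 := by
            have := Nat.eq_zero_of_dvd_of_lt hpj
            rcases Nat.eq_zero_or_pos (j:ℕ) with h0 | hpos
            · exact Fin.ext (by simpa using h0)
            · exact absurd (Nat.le_of_dvd hpos hpj) (not_le.mpr j.isLt)
          refine ⟨?_, hj0⟩
          rw [hj0] at h
          simpa using h
        · rintro ⟨h1, h2⟩
          rw [h1, h2]
          simp
      refine ⟨ι × Fin p, inferInstance, fun ij => χ ij.1 * (χs p) ^ (ij.2 : ℕ),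
        fun ij => c ij.1 * coef ij.2, ?_, ?_, ?_, ?_⟩
      · rintro ⟨i, j⟩
        rw [prod_cons, mul_pow, ← pow_mul]
        have e1 : χ i ^ (p * ∏ x ∈ Q, x) = 1 := by
          rw [mul_comm, pow_mul, hpow i, one_pow]
        have e2 : (χs p) ^ ((j:ℕ) * (p * ∏ x ∈ Q, x)) = 1 := by
          rw [show (j:ℕ) * (p * ∏ x ∈ Q, x) = p * ((j:ℕ) * ∏ x ∈ Q, x) by ring,
            pow_mul, hχp, one_pow]
        rw [e1, e2, one_mul]
      · intro x hx
        have hxu : IsUnit x := hx.isUnit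
        have hpow_apply : ∀ (ψ : MulChar F ℂ) (n : ℕ), (ψ ^ n) x = (ψ x) ^ n := by
          intro ψ n
          have := MulChar.pow_apply_coe ψ n hxu.unit
          simpa [IsUnit.unit_spec] using this
        have hfirst : (1 - (p:ℂ)⁻¹ * ∑ j ∈ range p, (χs p x) ^ j)
            = ∑ j : Fin p, coef j * (χs p x) ^ (j:ℕ) := by
          have hterm : ∀ j : Fin p, coef j * (χs p x) ^ (j:ℕ)
              = (if j = 0 then (χs p x) ^ (j:ℕ) else 0) - (p:ℂ)⁻¹ * (χs p x) ^ (j:ℕ) := by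
            intro j
            by_cases h : j = 0 <;> simp [hcoef, h, sub_mul]
          rw [sum_congr rfl (fun j _ => hterm j), sum_sub_distrib, sum_ite_eq' univ (0 : Fin p)]
          rw [← mul_sum, Fin.sum_univ_eq_sum_range (fun j => (χs p x) ^ j)]
          simp
        rw [prod_cons, hexp x hx, hfirst, sum_mul_sum, Finset.sum_comm, Fintype.sum_prod_type]
        refine Finset.sum_congr rfl fun i _ => Finset.sum_congr rfl fun j _ => ?_
        rw [MulChar.mul_apply, hpow_apply]
        ring
      · have hterm : ∀ (ij : ι × Fin p),
            (if χ ij.1 * (χs p) ^ (ij.2:ℕ) = 1 then c ij.1 * coef ij.2 else 0)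
            = (if χ ij.1 = 1 then c ij.1 else 0) * (if ij.2 = 0 then 1 - (p:ℂ)⁻¹ else 0) := by
          rintro ⟨i, j⟩
          rcases eq_or_ne (χ i) 1 with h1|h1
          · rcases eq_or_ne j 0 with h2|h2
            · rw [if_pos ((hiff i j).mpr ⟨h1, h2⟩), if_pos h1, if_pos h2, h2]
              simp [hcoef]
            · rw [if_neg (fun hc => h2 ((hiff i j).mp hc).2), if_neg h2, mul_zero]
          · rw [if_neg (fun hc => h1 ((hiff i j).mp hc).1), if_neg h1, zero_mul]
        calc (∑ ij : ι × Fin p, if χ ij.1 * (χs p) ^ (ij.2:ℕ) = 1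
                then c ij.1 * coef ij.2 else 0)
            = ∑ ij : ι × Fin p, (if χ ij.1 = 1 then c ij.1 else 0) *
                (if ij.2 = 0 then 1 - (p:ℂ)⁻¹ else 0) := by
              exact Fintype.sum_congr _ _ hterm
          _ = (∑ i : ι, if χ i = 1 then c i else 0) *
                (∑ j : Fin p, if j = 0 then 1 - (p:ℂ)⁻¹ else 0) := by
              rw [Fintype.sum_prod_type]
              exact (Finset.sum_mul_sum univ univ
                (fun i : ι => if χ i = 1 then c i else 0)
                (fun j : Fin p => if j = 0 then 1 - (p:ℂ)⁻¹ else 0)).symm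
          _ = ∏ r ∈ cons p Q hpQ, (1 - (r:ℂ)⁻¹) := by
              rw [htriv, sum_ite_eq' univ (0 : Fin p), prod_cons]
              simp [mul_comm]
      · have hcoefabs : ∀ j : Fin p, ‖coef j‖
            = if j = 0 then (1 - (p:ℝ)⁻¹) else (p:ℝ)⁻¹ := by
          intro j
          have hple : (p:ℝ)⁻¹ ≤ 1 := by
            rw [inv_le_one_iff₀]; right; linarith
          by_cases h : j = 0
          · rw [hcoef]
            simp only [h, if_pos]
            rw [show (1 : ℂ) - (p:ℂ)⁻¹ = ((1 - (p:ℝ)⁻¹ : ℝ) : ℂ) by push_cast; ring,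
              Complex.norm_real, Real.norm_eq_abs, abs_of_nonneg (by linarith)]
          · rw [hcoef]
            simp only [h, if_neg, if_false]
            rw [show -(p:ℂ)⁻¹ = (((-(p:ℝ)⁻¹) : ℝ) : ℂ) by push_cast; ring,
              Complex.norm_real, Real.norm_eq_abs, abs_of_nonpos (neg_nonpos.mpr (by positivity)), neg_neg]
        have hsumcoef : (∑ j : Fin p, ‖coef j‖) = 2 * (1 - (p:ℝ)⁻¹) := by
          rw [Fintype.sum_congr _ _ hcoefabs]
          have : ∀ j : Fin p, (if j = 0 then (1 - (p:ℝ)⁻¹) else (p:ℝ)⁻¹)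
              = (p:ℝ)⁻¹ + (if j = 0 then 1 - 2*(p:ℝ)⁻¹ else 0) := by
            intro j; by_cases h : j = 0 <;> simp [h] <;> ring
          rw [Fintype.sum_congr _ _ this, sum_add_distrib, sum_ite_eq' univ (0 : Fin p),
            sum_const, card_univ, Fintype.card_fin]
          have hpne : (p:ℝ) ≠ 0 := by positivity
          simp only [mem_univ, if_pos, nsmul_eq_mul]
          field_simp
          ring
        calc (∑ ij : ι × Fin p, ‖c ij.1 * coef ij.2‖)
            = (∑ i : ι, ‖c i‖) * (∑ j : Fin p, ‖coef j‖) := by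
              rw [Fintype.sum_congr _ _
                (fun ij : ι × Fin p => norm_mul (c ij.1) (coef ij.2)),
                Fintype.sum_prod_type]
              exact (Finset.sum_mul_sum univ univ
                (fun i : ι => ‖c i‖)
                (fun j : Fin p => ‖coef j‖)).symm
          _ ≤ (∏ r ∈ Q, (2 * (1 - (r:ℝ)⁻¹))) * (2 * (1 - (p:ℝ)⁻¹)) := by
              rw [hsumcoef]
              refine mul_le_mul_of_nonneg_right habs ?_
              have h1 : (p:ℝ)⁻¹ ≤ 1 := by
                rw [inv_le_one_iff₀]; right; linarith
              linarith
          _ = ∏ r ∈ cons p Q hpQ, (2 * (1 - (r:ℝ)⁻¹)) := by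
              rw [prod_cons, mul_comm]


lemma abs_mulChar_eq_one {F : Type*} [Field F] [Fintype F] (χ : MulChar F ℂ) {a : F}
    (ha : a ≠ 0) : ‖χ a‖ = 1 := by
  haveI : Fintype Fˣ := Fintype.ofFinite _
  haveI : NeZero (Fintype.card Fˣ) := ⟨Fintype.card_pos.ne'⟩
  have h := Complex.norm_eq_one_of_mem_rootsOfUnity
    (MulChar.apply_mem_rootsOfUnity (Units.mk0 a ha) (χ := χ))
  simpa [MulChar.coe_equivToUnitHom] using h

lemma jacobi_bound {F : Type*} [Field F] [Fintype F] [DecidableEq F]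
    (χ η : MulChar F ℂ) (hχ : χ ≠ 1) (hη : η ≠ 1) :
    ‖jacobiSum χ η‖ ≤ Real.sqrt (Fintype.card F) := by
  have h1q : (1 : ℝ) ≤ Real.sqrt (Fintype.card F) := by
    rw [show (1:ℝ) = Real.sqrt 1 by simp]
    exact Real.sqrt_le_sqrt (by exact_mod_cast Fintype.card_pos)
  by_cases hmul : χ * η = 1
  · have hinv : η = χ⁻¹ := by
      rw [eq_comm, inv_eq_iff_mul_eq_one, hmul]
    rw [hinv, jacobiSum_nontrivial_inv hχ, norm_neg,
      abs_mulChar_eq_one χ (by simp : (-1 : F) ≠ 0)]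
    exact h1q
  · have hring : ringChar ℂ ≠ ringChar F := by
      have h0 : ringChar ℂ = 0 := ringChar.eq_zero
      have : (ringChar F).Prime := CharP.char_is_prime F (ringChar F)
      rw [h0]
      exact fun h => this.ne_zero h.symm
    have key := jacobiSum_mul_jacobiSum_inv hring hχ hη hmul
    have hstar : jacobiSum χ⁻¹ η⁻¹ = (starRingEnd ℂ) (jacobiSum χ η) := by
      rw [← MulChar.star_eq_inv, ← MulChar.star_eq_inv]
      simp only [jacobiSum, map_sum, map_mul]
      rfl
    rw [hstar, Complex.mul_conj] at key
    have hnq : Complex.normSq (jacobiSum χ η) = Fintype.card F := by exact_mod_cast key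
    rw [Complex.norm_def, hnq]

end Helpers

/-- Let `m > 1` have exactly `t` distinct prime divisors and radical `m₀`, let `q` be an
odd prime power with `m₀ ∣ q - 1`, and `d ∈ 𝔽_q` nonzero.  Set `C = 2^t m₀ / φ(m₀)`.
If `q > (C + 4)²` then there exists `λ ∈ 𝔽_q` such that `λ² + d` is not a `p`-th power in
`𝔽_q` for any prime `p` dividing `m`. -/
theorem stmt_10 (m : ℕ) (hm : 1 < m) (q : ℕ) (hqodd : Odd q) (hq : IsPrimePow q)
    (hdvd : (∏ p ∈ m.primeFactors, p) ∣ q - 1)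
    (F : Type*) [Field F] [Fintype F] (hcard : Fintype.card F = q)
    (d : F) (hd : d ≠ 0)
    (hqC : ((2 : ℝ) ^ m.primeFactors.card * ((∏ p ∈ m.primeFactors, p : ℕ) : ℝ) /
        (Nat.totient (∏ p ∈ m.primeFactors, p) : ℝ) + 4) ^ 2 < (q : ℝ)) :
    ∃ lam : F, ∀ p : ℕ, p.Prime → p ∣ m → ∀ b : F, b ^ p ≠ lam ^ 2 + d := by
  classical
  by_contra hcon
  push_neg at hcon
  set P := m.primeFactors with hPdef
  have hPp : ∀ p ∈ P, p.Prime := fun p hp => Nat.prime_of_mem_primeFactors hp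
  have hq1 : 1 < q := hcard ▸ Fintype.one_lt_card
  -- characters of order p for each p ∈ P
  have hdvd' : ∀ p ∈ P, p ∣ Fintype.card F - 1 := by
    intro p hp
    exact dvd_trans (dvd_trans (Finset.dvd_prod_of_mem _ hp) hdvd) (by rw [hcard])
  have hex : ∀ p : ℕ, ∃ χ : MulChar F ℂ, p ∈ P → orderOf χ = p := by
    intro p
    by_cases hp : p ∈ P
    · obtain ⟨χ, hχ⟩ := MulChar.exists_mulChar_orderOf F (hdvd' p hp)
        (Complex.isPrimitiveRoot_exp p (hPp p hp).ne_zero)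
      exact ⟨χ, fun _ => hχ⟩
    · exact ⟨1, fun h => absurd h hp⟩
  choose χs hχs using hex
  obtain ⟨ι, hι, χ, c, hpow, hexp, htriv, habs⟩ := expand_chars P hPp χs (fun p hp => hχs p hp)
  -- quadratic character
  have hchar2 : ringChar F ≠ 2 := by
    intro h2
    obtain ⟨n, hpn, hcn⟩ := FiniteField.card F (ringChar F)
    rw [h2] at hcn
    have h2q : (2:ℕ) ∣ q := by
      rw [← hcard, hcn]; exact dvd_pow_self 2 n.ne_zero
    rw [Nat.odd_iff] at hqodd
    omega
  set η : MulChar F ℂ := (quadraticChar F).ringHomComp (Int.castRingHom ℂ) with hηdef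
  have hη1 : η ≠ 1 :=
    (MulChar.ringHomComp_ne_one_iff (RingHom.injective_int _)).mpr (quadraticChar_ne_one hchar2)
  have hηapp : ∀ a : F, η a = ((quadraticChar F a : ℤ) : ℂ) := fun a => rfl
  -- the main sum
  set S : ℂ := ∑ x ∈ (univ : Finset F).erase 0,
    (∏ p ∈ P, (1 - (p:ℂ)⁻¹ * ∑ j ∈ range p, (χs p x) ^ j)) * (1 + η (x - d)) with hSdef
  -- Part A : S = 0
  have hS0 : S = 0 := by
    rw [hSdef]
    refine Finset.sum_eq_zero fun x hx => ?_
    have hx0 : x ≠ 0 := Finset.ne_of_mem_erase hx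
    by_cases hT : ∃ p ∈ P, ∃ b : F, b ^ p = x
    · obtain ⟨p, hp, b, hb⟩ := hT
      have hb0 : b ≠ 0 := by
        rintro rfl
        rw [zero_pow (hPp p hp).ne_zero] at hb
        exact hx0 hb.symm
      have hχ1 : χs p x = 1 := by
        have hpp : (χs p) ^ p = 1 := by
          have h0 := pow_orderOf_eq_one (χs p)
          rwa [hχs p hp] at h0
        have h2 : (χs p b) ^ p = ((χs p) ^ p) b := by
          have := MulChar.pow_apply_coe (χs p) p hb0.isUnit.unit
          simpa [IsUnit.unit_spec] using this.symm
        rw [← hb, map_pow, h2, hpp, MulChar.one_apply hb0.isUnit]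
      have hfac : (1 : ℂ) - (p:ℂ)⁻¹ * ∑ j ∈ range p, (χs p x) ^ j = 0 := by
        have hsum : ∑ j ∈ range p, (χs p x) ^ j = (p:ℂ) := by
          rw [hχ1]; simp
        rw [hsum, inv_mul_cancel₀ (by exact_mod_cast (hPp p hp).ne_zero), sub_self]
      rw [Finset.prod_eq_zero hp hfac, zero_mul]
    · have hsq : ¬ IsSquare (x - d) := by
        intro hsq
        obtain ⟨r, hr⟩ := hsq
        obtain ⟨p, hpp, hpm, b, hb⟩ := hcon r
        have hbx : b ^ p = x := by
          rw [hb, sq, ← hr]; ring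
        exact hT ⟨p, Nat.mem_primeFactors.mpr ⟨hpp, hpm, by omega⟩, b, hbx⟩
      have hqc : quadraticChar F (x - d) = -1 :=
        quadraticChar_neg_one_iff_not_isSquare.mpr hsq
      have hzero : 1 + η (x - d) = 0 := by
        rw [hηapp, hqc]; norm_num
      rw [hzero, mul_zero]
  -- Part B : expansion
  have hSexp : S = ∑ i, c i * ∑ x ∈ (univ : Finset F).erase 0, χ i x * (1 + η (x - d)) := by
    rw [hSdef,
      Finset.sum_congr rfl (fun x hx => by
        rw [hexp x (Finset.ne_of_mem_erase hx), Finset.sum_mul]),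
      Finset.sum_comm]
    refine Finset.sum_congr rfl fun i _ => ?_
    rw [Finset.mul_sum]
    exact Finset.sum_congr rfl fun x _ => by ring
  -- Part C : the trivial-character inner sum
  have hshift : ∑ x : F, η (x - d) = 0 := by
    rw [Fintype.sum_equiv (Equiv.subRight d) (fun x => η (x - d)) η (fun x => rfl)]
    exact MulChar.sum_eq_zero_of_ne_one hη1
  have hAtriv : ∑ x ∈ (univ : Finset F).erase 0, (1 + η (x - d)) = ((q:ℂ) - 1) - η (0 - d) := by
    rw [Finset.sum_add_distrib, Finset.sum_const]
    have hcarde : ((univ : Finset F).erase 0).card = q - 1 := by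
      rw [Finset.card_erase_of_mem (mem_univ 0), Finset.card_univ, hcard]
    have herase : ∑ x ∈ (univ : Finset F).erase 0, η (x - d) = - η (0 - d) := by
      have h0 := Finset.add_sum_erase (univ : Finset F) (fun x => η (x - d)) (mem_univ 0)
      rw [hshift] at h0
      linear_combination h0
    rw [hcarde, herase, nsmul_eq_mul, mul_one, Nat.cast_sub (le_of_lt hq1), Nat.cast_one]
    ring
  -- Part D : nontrivial inner sums are bounded by √q
  have hAbound : ∀ ψ : MulChar F ℂ, ψ ≠ 1 →
      ‖∑ x ∈ (univ : Finset F).erase 0, ψ x * (1 + η (x - d))‖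
        ≤ Real.sqrt q := by
    intro ψ hψ
    have hψ0 : ψ (0 : F) = 0 := MulChar.map_nonunit ψ not_isUnit_zero
    have hsplit : ∑ x ∈ (univ : Finset F).erase 0, ψ x * (1 + η (x - d))
        = ∑ x : F, ψ x * η (x - d) := by
      have h1 : ∀ x : F, ψ x * (1 + η (x - d)) = ψ x + ψ x * η (x - d) := fun x => by ring
      rw [Finset.sum_congr rfl fun x _ => h1 x, Finset.sum_add_distrib]
      have h2 : ∑ x ∈ (univ : Finset F).erase 0, ψ x = 0 := by
        have h0 := Finset.add_sum_erase (univ : Finset F) ψ (mem_univ 0)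
        rw [MulChar.sum_eq_zero_of_ne_one hψ, hψ0, zero_add] at h0
        exact h0
      have h3 : ∑ x ∈ (univ : Finset F).erase 0, ψ x * η (x - d)
          = ∑ x : F, ψ x * η (x - d) := by
        have h0 := Finset.add_sum_erase (univ : Finset F) (fun x => ψ x * η (x - d))
          (mem_univ 0)
        simp only [hψ0, zero_mul, zero_add] at h0
        exact h0
      rw [h2, h3, zero_add]
    have hsub : ∑ x : F, ψ x * η (x - d)
        = (ψ d * (η d * η (-1))) * jacobiSum ψ η := by
      rw [jacobiSum, Finset.mul_sum,
        ← Equiv.sum_comp (Equiv.mulLeft₀ d hd) (fun x => ψ x * η (x - d))]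
      refine Fintype.sum_congr _ _ fun y => ?_
      have e1 : (Equiv.mulLeft₀ d hd) y = d * y := rfl
      rw [e1, map_mul, show d * y - d = d * (-1 * (1 - y)) by ring, map_mul, map_mul]
      ring
    rw [hsplit, hsub, norm_mul, norm_mul, norm_mul, abs_mulChar_eq_one ψ hd,
      abs_mulChar_eq_one η hd, abs_mulChar_eq_one η (by simp : (-1 : F) ≠ 0)]
    have hjb := jacobi_bound ψ η hψ hη1
    rw [hcard] at hjb
    simpa using hjb
  -- Part E : combine
  have hAtriv' : ∀ i, χ i = 1 →
      ∑ x ∈ (univ : Finset F).erase 0, χ i x * (1 + η (x - d)) = ((q:ℂ) - 1) - η (0 - d) := by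
    intro i hi
    rw [← hAtriv]
    refine Finset.sum_congr rfl fun x hx => ?_
    rw [hi, MulChar.one_apply (Finset.ne_of_mem_erase hx).isUnit, one_mul]
  have hkey : (∏ p ∈ P, (1 - (p:ℂ)⁻¹)) * (((q:ℂ) - 1) - η (0 - d))
      = - ∑ i, (if χ i = 1 then 0 else
          c i * ∑ x ∈ (univ : Finset F).erase 0, χ i x * (1 + η (x - d))) := by
    have hterm : ∀ i, c i * ∑ x ∈ (univ : Finset F).erase 0, χ i x * (1 + η (x - d))
        = (if χ i = 1 then c i else 0) * (((q:ℂ) - 1) - η (0 - d))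
          + (if χ i = 1 then 0 else
              c i * ∑ x ∈ (univ : Finset F).erase 0, χ i x * (1 + η (x - d))) := by
      intro i
      by_cases hi : χ i = 1
      · rw [if_pos hi, if_pos hi, add_zero, hAtriv' i hi]
      · rw [if_neg hi, if_neg hi, zero_mul, zero_add]
    have h0 : (0:ℂ) = ∑ i, c i * ∑ x ∈ (univ : Finset F).erase 0, χ i x * (1 + η (x - d)) := by
      rw [← hSexp, hS0]
    rw [Fintype.sum_congr _ _ hterm, Finset.sum_add_distrib, ← Finset.sum_mul, htriv] at h0
    linear_combination -h0
  -- absolute values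
  have habs1 : ‖∏ p ∈ P, (1 - (p:ℂ)⁻¹)‖ = ∏ p ∈ P, (1 - (p:ℝ)⁻¹) := by
    rw [norm_prod]
    refine Finset.prod_congr rfl fun p hp => ?_
    have hple : (p:ℝ)⁻¹ ≤ 1 := by
      rw [inv_le_one_iff₀]; right; exact_mod_cast (hPp p hp).one_lt.le
    rw [show (1 : ℂ) - (p:ℂ)⁻¹ = ((1 - (p:ℝ)⁻¹ : ℝ) : ℂ) by push_cast; ring,
      Complex.norm_real, Real.norm_eq_abs, abs_of_nonneg (by linarith)]
  have hq0 : (0:ℝ) ≤ (q:ℝ) := by positivity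
  have hA0 : (q:ℝ) - 2 ≤ ‖((q:ℂ) - 1) - η (0 - d)‖ := by
    have h1 : ‖(q:ℂ) - 1‖ = (q:ℝ) - 1 := by
      rw [show (q:ℂ) - 1 = (((q:ℝ) - 1 : ℝ) : ℂ) by push_cast; ring, Complex.norm_real, Real.norm_eq_abs]
      have hq1' : (1:ℝ) ≤ (q:ℝ) := by exact_mod_cast hq1.le
      rw [abs_of_nonneg (by linarith)]
    have h2 : ‖η (0 - d)‖ = 1 := by
      rw [zero_sub]
      exact abs_mulChar_eq_one η (neg_ne_zero.mpr hd)
    have h3 := norm_sub_norm_le ((q:ℂ) - 1) (η (0 - d))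
    rw [h1, h2] at h3
    linarith
  have hRHS : ‖∑ i, (if χ i = 1 then 0 else
      c i * ∑ x ∈ (univ : Finset F).erase 0, χ i x * (1 + η (x - d)))‖
      ≤ (∏ p ∈ P, (2 * (1 - (p:ℝ)⁻¹))) * Real.sqrt q := by
    calc ‖∑ i, (if χ i = 1 then 0 else
        c i * ∑ x ∈ (univ : Finset F).erase 0, χ i x * (1 + η (x - d)))‖
        ≤ ∑ i, ‖if χ i = 1 then 0 else
          c i * ∑ x ∈ (univ : Finset F).erase 0, χ i x * (1 + η (x - d))‖ := by
          exact norm_sum_le _ _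
      _ ≤ ∑ i, ‖c i‖ * Real.sqrt q := by
          refine Finset.sum_le_sum fun i _ => ?_
          by_cases hi : χ i = 1
          · rw [if_pos hi]
            simp only [norm_zero]
            positivity
          · rw [if_neg hi, norm_mul]
            exact mul_le_mul_of_nonneg_left (hAbound (χ i) hi) (norm_nonneg _)
      _ = (∑ i, ‖c i‖) * Real.sqrt q := by rw [Finset.sum_mul]
      _ ≤ (∏ p ∈ P, (2 * (1 - (p:ℝ)⁻¹))) * Real.sqrt q := by
          exact mul_le_mul_of_nonneg_right habs (Real.sqrt_nonneg _)
  have hprodpos : (0:ℝ) < ∏ p ∈ P, (1 - (p:ℝ)⁻¹) := by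
    refine Finset.prod_pos fun p hp => ?_
    have : (p:ℝ)⁻¹ < 1 := by
      apply inv_lt_one_of_one_lt₀
      exact_mod_cast (hPp p hp).one_lt
    linarith
  have hfinal : (q:ℝ) - 2 ≤ (2:ℝ) ^ P.card * Real.sqrt q := by
    have h1 : (∏ p ∈ P, (1 - (p:ℝ)⁻¹)) * ((q:ℝ) - 2)
        ≤ (∏ p ∈ P, (1 - (p:ℝ)⁻¹)) * ((2:ℝ) ^ P.card * Real.sqrt q) := by
      have hLHS := congrArg (‖·‖) hkey
      rw [norm_mul, habs1, norm_neg] at hLHS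
      have h2 : ∏ p ∈ P, (2 * (1 - (p:ℝ)⁻¹))
          = (2:ℝ) ^ P.card * ∏ p ∈ P, (1 - (p:ℝ)⁻¹) := by
        rw [Finset.prod_mul_distrib, Finset.prod_const]
      calc (∏ p ∈ P, (1 - (p:ℝ)⁻¹)) * ((q:ℝ) - 2)
          ≤ (∏ p ∈ P, (1 - (p:ℝ)⁻¹)) * ‖((q:ℂ) - 1) - η (0 - d)‖ :=
            mul_le_mul_of_nonneg_left hA0 hprodpos.le
        _ = ‖∑ i, (if χ i = 1 then 0 else
              c i * ∑ x ∈ (univ : Finset F).erase 0, χ i x * (1 + η (x - d)))‖ := hLHS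
        _ ≤ (∏ p ∈ P, (2 * (1 - (p:ℝ)⁻¹))) * Real.sqrt q := hRHS
        _ = (∏ p ∈ P, (1 - (p:ℝ)⁻¹)) * ((2:ℝ) ^ P.card * Real.sqrt q) := by
            rw [h2]; ring
    exact le_of_mul_le_mul_left h1 hprodpos
  -- numeric contradiction
  set t := P.card
  set m₀ : ℕ := ∏ p ∈ P, p with hm₀
  have hm₀pos : 0 < m₀ := Finset.prod_pos fun p hp => (hPp p hp).pos
  have hφpos : 0 < Nat.totient m₀ := Nat.totient_pos.mpr hm₀pos
  have hφle : Nat.totient m₀ ≤ m₀ := Nat.totient_le m₀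
  set C : ℝ := (2:ℝ) ^ t * (m₀:ℝ) / (Nat.totient m₀ : ℝ) with hC
  have hC0 : (0:ℝ) ≤ C := by positivity
  have h2tC : (2:ℝ) ^ t ≤ C := by
    rw [hC, le_div_iff₀ (by exact_mod_cast hφpos)]
    have : ((Nat.totient m₀ : ℝ)) ≤ (m₀ : ℝ) := by exact_mod_cast hφle
    nlinarith [pow_pos (by norm_num : (0:ℝ) < 2) t]
  have hsqrt : C + 4 < Real.sqrt q := by
    rw [← Real.sqrt_sq (by positivity : (0:ℝ) ≤ C + 4)]
    exact Real.sqrt_lt_sqrt (by positivity) hqC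
  have hsq : Real.sqrt q ^ 2 = (q:ℝ) := Real.sq_sqrt hq0
  have hs0 : (0:ℝ) ≤ Real.sqrt q := Real.sqrt_nonneg _
  nlinarith [hfinal, hsqrt, h2tC, hC0, hsq, hs0,
    mul_le_mul_of_nonneg_right h2tC hs0,
    mul_lt_mul_of_pos_right hsqrt (by nlinarith : (0:ℝ) < Real.sqrt q)]
end

section
/- Let m₀ be a square-free positive integer divisible by at least two primes, all of whose prime divisors are ≥ 7, let t be the number of distinct prime divisors of m₀, and let ℓ be an odd prime. Then ℓ·m₀ ≥ 16·(2^{t−2}·m₀/φ(m₀) + 1)² (as real numbers), where φ is Euler's totient function. -/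
lemma aux_key (s : ℕ) : 16 * ((2:ℝ)^s * (7/6)^(s+2) + 1)^2 ≤ 3 * 7^(s+2) := by
  induction s with
  | zero => norm_num
  | succ n ih =>
    have ha : (0:ℝ) ≤ (2:ℝ)^n * (7/6)^(n+2) := by positivity
    have h1 : (2:ℝ)^(n+1) * (7/6)^(n+1+2) = (7/3) * ((2:ℝ)^n * (7/6)^(n+2)) := by
      ring
    have h2 : (3:ℝ) * 7^(n+1+2) = 7 * (3 * 7^(n+2)) := by ring
    rw [h1, h2]
    nlinarith [sq_nonneg ((2:ℝ)^n * (7/6)^(n+2))]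

/-- If `m₀` is squarefree with `t ≥ 2` distinct prime divisors, each at least `7`, and `ℓ` is
an odd prime, then `ℓ m₀ ≥ 16 (2^(t-2) m₀ / φ(m₀) + 1)²` as real numbers. -/
theorem stmt_12 (m₀ : ℕ) (hsf : Squarefree m₀) (ht : 2 ≤ m₀.primeFactors.card)
    (h7 : ∀ p ∈ m₀.primeFactors, 7 ≤ p) (ℓ : ℕ) (hℓ : ℓ.Prime) (hℓodd : Odd ℓ) :
    (16 * ((2 : ℝ) ^ (m₀.primeFactors.card - 2) * (m₀ : ℝ) / (Nat.totient m₀ : ℝ) + 1) ^ 2 : ℝ)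
      ≤ (ℓ : ℝ) * (m₀ : ℝ) := by
  set t := m₀.primeFactors.card with htdef
  have hm0 : m₀ ≠ 0 := hsf.ne_zero
  have hmpos : 0 < m₀ := Nat.pos_of_ne_zero hm0
  have hφpos : 0 < Nat.totient m₀ := Nat.totient_pos.mpr hmpos
  -- φ(m₀) = ∏ (p - 1)
  have hprod : ∏ p ∈ m₀.primeFactors, p = m₀ := Nat.prod_primeFactors_of_squarefree hsf
  have hφ : Nat.totient m₀ = ∏ p ∈ m₀.primeFactors, (p - 1) := by
    have := Nat.totient_mul_prod_primeFactors m₀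
    rw [hprod] at this
    exact Nat.eq_of_mul_eq_mul_right hmpos (by rw [this]; ring)
  -- 6^t * m₀ ≤ 7^t * φ(m₀)
  have hkey : 6 ^ t * m₀ ≤ 7 ^ t * Nat.totient m₀ := by
    rw [hφ]
    have e1 : 6 ^ t * m₀ = ∏ p ∈ m₀.primeFactors, (6 * p) := by
      rw [Finset.prod_mul_distrib, Finset.prod_const, hprod]
    have e2 : 7 ^ t * ∏ p ∈ m₀.primeFactors, (p - 1)
        = ∏ p ∈ m₀.primeFactors, (7 * (p - 1)) := by
      rw [Finset.prod_mul_distrib, Finset.prod_const]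
    rw [e1, e2]
    refine Finset.prod_le_prod' fun p hp => ?_
    have := h7 p hp
    omega
  -- 7^t ≤ m₀
  have h7t : 7 ^ t ≤ m₀ := by
    calc 7 ^ t = ∏ _p ∈ m₀.primeFactors, 7 := by
            rw [Finset.prod_const]
      _ ≤ ∏ p ∈ m₀.primeFactors, p := Finset.prod_le_prod' fun p hp => h7 p hp
      _ = m₀ := hprod
  -- 3 ≤ ℓ
  have hℓ3 : 3 ≤ ℓ := by
    rcases hℓodd with ⟨k, hk⟩
    have := hℓ.two_le
    omega
  obtain ⟨s, hs⟩ : ∃ s, t = s + 2 := ⟨t - 2, by omega⟩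
  have hts : t - 2 = s := by omega
  -- ratio bound in ℝ
  have hratio : (m₀ : ℝ) / (Nat.totient m₀ : ℝ) ≤ (7/6) ^ t := by
    rw [div_le_iff₀ (by exact_mod_cast hφpos), div_pow, div_mul_eq_mul_div,
      le_div_iff₀ (by positivity)]
    calc (m₀ : ℝ) * 6 ^ t = ((6 ^ t * m₀ : ℕ) : ℝ) := by push_cast; ring
      _ ≤ ((7 ^ t * Nat.totient m₀ : ℕ) : ℝ) := by exact_mod_cast hkey
      _ = (7:ℝ) ^ t * Nat.totient m₀ := by push_cast; ring
  have h2nn : (0:ℝ) ≤ (2:ℝ) ^ s := by positivity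
  have hdnn : (0:ℝ) ≤ (m₀ : ℝ) / (Nat.totient m₀ : ℝ) := by positivity
  rw [hts]
  calc (16:ℝ) * ((2:ℝ) ^ s * (m₀:ℝ) / (Nat.totient m₀ : ℝ) + 1) ^ 2
      ≤ 16 * ((2:ℝ)^s * (7/6)^(s+2) + 1)^2 := by
        have hle : (2:ℝ) ^ s * (m₀:ℝ) / (Nat.totient m₀ : ℝ) ≤ (2:ℝ)^s * (7/6)^(s+2) := by
          rw [mul_div_assoc]
          calc (2:ℝ)^s * ((m₀:ℝ) / (Nat.totient m₀ : ℝ))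
              ≤ (2:ℝ)^s * (7/6)^t := by
                exact mul_le_mul_of_nonneg_left hratio h2nn
            _ = (2:ℝ)^s * (7/6)^(s+2) := by rw [hs]
        have hnn : (0:ℝ) ≤ (2:ℝ) ^ s * (m₀:ℝ) / (Nat.totient m₀ : ℝ) + 1 := by positivity
        have := pow_le_pow_left₀ hnn (by linarith : (2:ℝ)^s * (m₀:ℝ) / (Nat.totient m₀:ℝ) + 1 ≤ (2:ℝ)^s * (7/6)^(s+2) + 1) 2
        linarith
    _ ≤ 3 * 7^(s+2) := aux_key s
    _ ≤ (ℓ:ℝ) * (m₀:ℝ) := by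
        have h1 : (7:ℝ)^(s+2) ≤ (m₀:ℝ) := by
          calc (7:ℝ)^(s+2) = ((7^(s+2) : ℕ) : ℝ) := by push_cast; ring
            _ ≤ (m₀:ℝ) := by exact_mod_cast (hs ▸ h7t)
        have h2 : (3:ℝ) ≤ (ℓ:ℝ) := by exact_mod_cast hℓ3
        have hm : (0:ℝ) ≤ (m₀:ℝ) := by positivity
        nlinarith
end

section
/- The polynomial 𝒬(X) = (ζ^{-1} − ζ)^{-1}((X − ζ)^ℓ − (X − ζ^{-1})^ℓ) is separable, i.e. 𝒬(X) and its formal derivative 𝒬'(X) have no common root in any extension field (equivalently, 𝒬 has no repeated roots). -/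
open Polynomial

/-- Let `ℓ` be an odd prime and `E` a field of characteristic not dividing `ℓ` containing a
primitive `ℓ`-th root of unity `ζ`.  The Rikuna polynomial
`𝒬(X) = (ζ⁻¹ - ζ)⁻¹ ((X - ζ)^ℓ - (X - ζ⁻¹)^ℓ)` is separable (has no repeated roots). -/
theorem stmt_13 (ℓ : ℕ) (hℓ : ℓ.Prime) (hodd : Odd ℓ)
    (E : Type*) [Field E] (hchar : (ℓ : E) ≠ 0) (ζ : E) (hζ : IsPrimitiveRoot ζ ℓ) :
    (C (ζ⁻¹ - ζ)⁻¹ * ((X - C ζ) ^ ℓ - (X - C ζ⁻¹) ^ ℓ)).Separable := by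
  have hℓ2 : ℓ ≠ 2 := by rintro rfl; exact (by norm_num : ¬ Odd 2) hodd
  have hζne : ζ ≠ ζ⁻¹ := by
    intro h
    have h2 : ζ ^ 2 = 1 := by
      have hz : ζ ≠ 0 := hζ.ne_zero hℓ.ne_zero
      field_simp [pow_two]
      rw [pow_two]; nth_rewrite 2 [h]
      field_simp
    exact hℓ2 ((Nat.prime_dvd_prime_iff_eq hℓ Nat.prime_two).mp
      ((hζ.pow_eq_one_iff_dvd 2).mp h2))
  have hc : (ζ⁻¹ - ζ)⁻¹ ≠ 0 :=
    inv_ne_zero (sub_ne_zero.mpr fun h => hζne h.symm)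
  rw [Polynomial.Separable]
  set K := AlgebraicClosure E
  rw [Polynomial.isCoprime_iff_aeval_ne_zero_of_isAlgClosed E K]
  intro a
  by_contra hcon
  push_neg at hcon
  obtain ⟨h0, h1⟩ := hcon
  set ζ' := algebraMap E K ζ with hζ'
  have hinj : Function.Injective (algebraMap E K) := (algebraMap E K).injective
  have hζ'ne : ζ' ≠ ζ'⁻¹ := by
    rw [hζ', ← map_inv₀]
    exact fun h => hζne (hinj h)
  set u := a - ζ'
  set v := a - ζ'⁻¹
  have hc' : ((algebraMap E K ζ)⁻¹ - algebraMap E K ζ)⁻¹ ≠ 0 :=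
    inv_ne_zero (sub_ne_zero.mpr fun h => hζ'ne (hζ' ▸ h.symm))
  have e0 : u ^ ℓ = v ^ ℓ := by
    have := h0
    simp only [map_mul, map_sub, map_pow, aeval_X, aeval_C, map_inv₀] at this
    rcases mul_eq_zero.mp this with h | h
    · exact absurd h hc'
    · rw [sub_eq_zero] at h; simpa [u, v, hζ', map_inv₀] using h
  have e1 : u ^ (ℓ - 1) = v ^ (ℓ - 1) := by
    have hd : ((C (ζ⁻¹ - ζ)⁻¹ * ((X - C ζ) ^ ℓ - (X - C ζ⁻¹) ^ ℓ)).derivative)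
        = C (ζ⁻¹ - ζ)⁻¹ * (C (ℓ : E) * ((X - C ζ) ^ (ℓ - 1) - (X - C ζ⁻¹) ^ (ℓ - 1))) := by
      rw [derivative_mul, derivative_C, zero_mul, zero_add, derivative_sub,
        derivative_pow, derivative_pow, derivative_sub, derivative_sub, derivative_X,
        derivative_C, derivative_C]
      ring
    rw [hd] at h1
    simp only [map_mul, map_sub, map_pow, aeval_X, aeval_C, map_inv₀] at h1
    have hℓK : ((ℓ : K)) ≠ 0 := by
      intro h
      exact hchar (hinj (by rw [map_natCast, map_zero, h]))
    rcases mul_eq_zero.mp h1 with h | h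
    · exact absurd h hc'
    rcases mul_eq_zero.mp h with h | h
    · exact absurd h hℓK
    · rw [sub_eq_zero] at h; simpa [u, v, hζ', map_inv₀] using h
  have hu : u ≠ 0 := by
    intro h
    have : v ^ ℓ = 0 := by rw [← e0, h, zero_pow hℓ.ne_zero]
    have hv : v = 0 := pow_eq_zero_iff hℓ.ne_zero |>.mp this
    apply hζ'ne
    have h1' : a = ζ' := by rwa [sub_eq_zero] at h
    have h2' : a = ζ'⁻¹ := by rwa [sub_eq_zero] at hv
    exact h1'.symm.trans h2'
  have huv : u = v := by
    have hpow : u ^ (ℓ - 1) ≠ 0 := pow_ne_zero _ hu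
    have hℓ1 : ℓ - 1 + 1 = ℓ := Nat.succ_pred_eq_of_pos hℓ.pos
    have : u ^ (ℓ - 1) * u = u ^ (ℓ - 1) * v := by
      rw [e1]
      calc v ^ (ℓ - 1) * u = u ^ (ℓ - 1) * u := by rw [e1]
        _ = u ^ ℓ := by rw [← pow_succ, hℓ1]
        _ = v ^ ℓ := e0
        _ = v ^ (ℓ - 1) * v := by rw [← pow_succ, hℓ1]
    exact mul_left_cancel₀ hpow this
  apply hζ'ne
  have : -ζ' = -ζ'⁻¹ := by
    have := huv
    simp only [u, v, sub_eq_add_neg] at this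
    exact add_left_cancel this
  linear_combination -this
end

section
/- Let q be an odd prime power and ℓ an odd prime not dividing q with q ≡ −1 (mod ℓ), let ζ be a primitive ℓ-th root of unity in the quadratic extension 𝔽_{q²} of 𝔽_q, and let ω = ζ + ζ^{-1} ∈ 𝔽_q. Let m > 1 be an integer and γ ∈ 𝔽_q such that X^m − (ℓζ + γ) is irreducible over 𝔽_{q²}. Then the polynomial Q(Z) = (Z^m − γ)² − ℓω(Z^m − γ) + ℓ², of degree 2m, is irreducible over 𝔽_q. -/
open Polynomial

/-- If the image of a polynomial under a field map is a unit, the polynomial is a unit. -/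
lemma aux_map_unit_isUnit {F E : Type*} [Field F] [Field E] (f : F →+* E)
    {B : Polynomial F} (h : IsUnit (B.map f)) : IsUnit B := by
  obtain ⟨b, hb, hBb⟩ := Polynomial.isUnit_iff.mp h
  have hc : f (B.coeff 0) = b := by
    rw [← Polynomial.coeff_map, ← hBb, Polynomial.coeff_C]; simp
  have hB : B = Polynomial.C (B.coeff 0) := by
    apply Polynomial.map_injective f f.injective
    rw [Polynomial.map_C, hc, hBb]
  rw [hB]
  refine Polynomial.isUnit_C.mpr (isUnit_iff_ne_zero.mpr ?_)
  intro h0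
  rw [h0, map_zero] at hc
  exact hb.ne_zero hc.symm

/-- If `A.map f = (X^m - C c) * R` with `R` a unit, then `c` is in the range of `f`. -/
lemma aux_factor_coeff {F E : Type*} [Field F] [Field E] (f : F →+* E) {m : ℕ} (hm : 0 < m)
    (c : E) {A : Polynomial F} {R : Polynomial E} (hR : IsUnit R)
    (h : A.map f = (Polynomial.X ^ m - Polynomial.C c) * R) : ∃ x, f x = c := by
  obtain ⟨r, hr, hRr⟩ := Polynomial.isUnit_iff.mp hR
  subst hRr
  have h0 : f (A.coeff 0) = -c * r := by
    rw [← Polynomial.coeff_map, h, Polynomial.coeff_mul_C]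
    simp only [Polynomial.coeff_sub, Polynomial.coeff_X_pow, Polynomial.coeff_C]
    rw [if_neg (by omega : ¬(0 = m))]
    simp [mul_comm]
  have hmc : f (A.coeff m) = r := by
    rw [← Polynomial.coeff_map, h, Polynomial.coeff_mul_C]
    simp [Polynomial.coeff_X_pow, Polynomial.coeff_C, hm.ne']
  have hrne : r ≠ 0 := hr.ne_zero
  refine ⟨-(A.coeff 0) * (A.coeff m)⁻¹, ?_⟩
  rw [map_mul, map_neg, h0, map_inv₀, hmc]
  field_simp

/-- Let `q` be an odd prime power, `ℓ` an odd prime with `ℓ ∤ q` and `q ≡ -1 (mod ℓ)`,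
`ζ` a primitive `ℓ`-th root of unity in the quadratic extension `E = 𝔽_{q²}` of `F = 𝔽_q`,
and `ω = ζ + ζ⁻¹ ∈ 𝔽_q`.  Let `m > 1` and `γ ∈ 𝔽_q` with `X^m - (ℓζ + γ)` irreducible over
`𝔽_{q²}`.  Then `Q(Z) = (Z^m - γ)² - ℓω(Z^m - γ) + ℓ²`, of degree `2m`, is irreducible over
`𝔽_q`. -/
theorem stmt_16 (q ℓ : ℕ) (hqodd : Odd q) (hq : IsPrimePow q)
    (hℓ : ℓ.Prime) (hℓodd : Odd ℓ) (hℓq : ¬ ℓ ∣ q) (hcong : ℓ ∣ q + 1)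
    (F E : Type*) [Field F] [Field E] [Algebra F E] [Fintype F] [Fintype E]
    (hcardF : Fintype.card F = q) (hcardE : Fintype.card E = q ^ 2)
    (ζ : E) (hζ : IsPrimitiveRoot ζ ℓ)
    (ω : F) (hω : algebraMap F E ω = ζ + ζ⁻¹)
    (m : ℕ) (hm : 1 < m) (γ : F)
    (hirr : Irreducible (X ^ m - C ((ℓ : E) * ζ + algebraMap F E γ) : Polynomial E)) :
    Irreducible ((X ^ m - C γ) ^ 2 - C ((ℓ : F) * ω) * (X ^ m - C γ)
      + C ((ℓ : F) ^ 2) : Polynomial F) := by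
  set f : F →+* E := algebraMap F E with hfdef
  have hf : Function.Injective f := f.injective
  have hm0 : 0 < m := lt_trans Nat.zero_lt_one hm
  obtain ⟨p, k, hpP, hk, hpk⟩ := hq
  have hp : p.Prime := hpP.nat_prime
  -- characteristic of E is p
  have hchE : CharP E p := by
    set r := ringChar E with hr
    haveI : CharP E r := ringChar.charP E
    obtain ⟨n, hrP, hcard⟩ := FiniteField.card E r
    have h2k : (p ^ k) ^ 2 = r ^ (n : ℕ) := by rw [hpk, ← hcardE, hcard]
    have hdvd : p ∣ r ^ (n : ℕ) := by
      rw [← h2k]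
      exact dvd_pow (dvd_pow_self p hk.ne') two_ne_zero
    have hpr : p = r := (Nat.prime_dvd_prime_iff_eq hp hrP).mp (hp.dvd_of_dvd_pow hdvd)
    rw [hpr]
    exact ringChar.charP E
  haveI := hchE
  -- ℓ is invertible in E
  have hℓE : (ℓ : E) ≠ 0 := by
    intro h0
    have hpd : p ∣ ℓ := (CharP.cast_eq_zero_iff E p ℓ).mp h0
    have : p = ℓ := (Nat.prime_dvd_prime_iff_eq hp hℓ).mp hpd
    exact hℓq (this ▸ (hpk ▸ dvd_pow_self p hk.ne'))
  have hℓF : (ℓ : F) ≠ 0 := by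
    intro h0
    apply hℓE
    rw [← map_natCast f, h0, map_zero]
  -- ζ is not in the range of f
  have hζ1 : ζ ≠ 1 := hζ.ne_one hℓ.one_lt
  have hζ0 : ζ ≠ 0 := by
    intro h0
    have := hζ.pow_eq_one
    rw [h0, zero_pow hℓ.ne_zero] at this
    exact zero_ne_one this
  have hnotr : ∀ y : F, f y ≠ ζ := by
    intro y hy
    have hy1 : y ^ ℓ = 1 := hf (by rw [map_pow, hy, map_one, hζ.pow_eq_one])
    have hyne1 : y ≠ 1 := by
      intro h1
      exact hζ1 (by rw [← hy, h1, map_one])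
    have hord : orderOf y = ℓ := by
      rcases (Nat.dvd_prime hℓ).mp (orderOf_dvd_of_pow_eq_one hy1) with h | h
      · exact absurd (orderOf_eq_one_iff.mp h) hyne1
      · exact h
    have hy0 : y ≠ 0 := by
      intro h0
      rw [h0, zero_pow hℓ.ne_zero] at hy1
      exact zero_ne_one hy1
    have hdvd : ℓ ∣ q - 1 := by
      have h1 : y ^ (q - 1) = 1 := by
        rw [← hcardF]
        exact FiniteField.pow_card_sub_one_eq_one y hy0
      exact hord ▸ orderOf_dvd_of_pow_eq_one h1
    have hq1 : 1 ≤ q := by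
      rcases Nat.eq_zero_or_pos q with h | h
      · exact absurd (h ▸ dvd_zero ℓ) hℓq
      · exact h
    have h2 : ℓ ∣ 2 := by
      have hsub := Nat.dvd_sub hcong hdvd
      have heq : q + 1 - (q - 1) = 2 := by omega
      rwa [heq] at hsub
    have hle : ℓ = 2 := le_antisymm (Nat.le_of_dvd two_pos h2) hℓ.two_le
    rw [hle] at hℓodd
    exact (Nat.not_odd_iff_even.mpr even_two) hℓodd
  -- ζ^q = ζ⁻¹
  have hζq : ζ ^ q = ζ⁻¹ := by
    obtain ⟨t, ht⟩ := hcong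
    have h1 : ζ ^ (q + 1) = 1 := by rw [ht, pow_mul, hζ.pow_eq_one, one_pow]
    have h2 : ζ ^ q * ζ = 1 := by rw [← pow_succ]; exact h1
    field_simp
    linear_combination h2
  -- the Frobenius x ↦ x^q on E
  haveI : ExpChar E p := ExpChar.prime hp
  set σ : E →+* E := iterateFrobenius E p k with hσdef
  have hσ : ∀ x : E, σ x = x ^ q := by
    intro x
    rw [hσdef, iterateFrobenius_def, hpk]
  have hσbij : Function.Bijective σ :=
    ⟨σ.injective, Finite.injective_iff_surjective.mp σ.injective⟩
  set e : E ≃+* E := RingEquiv.ofBijective σ hσbij with hedef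
  -- the two conjugate factors
  set c₁ : E := (ℓ : E) * ζ + f γ with hc1
  set c₂ : E := (ℓ : E) * ζ⁻¹ + f γ with hc2
  set P : Polynomial E := X ^ m - C c₁ with hP
  set P' : Polynomial E := X ^ m - C c₂ with hP'
  have hPmonic : P.Monic := monic_X_pow_sub_C c₁ hm0.ne'
  have hP'monic : P'.Monic := monic_X_pow_sub_C c₂ hm0.ne'
  have hσc : σ c₁ = c₂ := by
    rw [hc1, hc2, map_add, map_mul, map_natCast, hσ ζ, hζq, hσ (f γ), ← map_pow, ← hcardF,
      FiniteField.pow_card]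
  -- P' is irreducible
  have hirrP : Irreducible P := hirr
  have hirrP' : Irreducible P' := by
    have hec : (e : E →+* E) c₁ = c₂ := hσc
    have hmap : P.map (e : E →+* E) = P' := by
      rw [hP, hP', Polynomial.map_sub, Polynomial.map_pow, map_X, map_C, hec]
    have h1 := Irreducible.map (Polynomial.mapEquiv e) hirrP
    rw [Polynomial.mapEquiv_apply] at h1
    rwa [hmap] at h1
  have hPprime : Prime P := hirrP.prime
  -- factorization of the image of Q
  set Q : Polynomial F := (X ^ m - C γ) ^ 2 - C ((ℓ : F) * ω) * (X ^ m - C γ)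
      + C ((ℓ : F) ^ 2) with hQ
  have hfac : Q.map f = P * P' := by
    have hzz : (C ζ : Polynomial E) * C ζ⁻¹ = 1 := by
      rw [← C_mul, mul_inv_cancel₀ hζ0, C_1]
    have e1 : f ((ℓ : F) * ω) = (ℓ : E) * (ζ + ζ⁻¹) := by
      rw [map_mul, map_natCast, hfdef, hω]
    have e2 : f ((ℓ : F) ^ 2) = (ℓ : E) ^ 2 := by
      rw [map_pow, map_natCast]
    rw [hQ, hP, hP', hc1, hc2]
    rw [Polynomial.map_add, Polynomial.map_sub, Polynomial.map_pow, Polynomial.map_sub,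
      Polynomial.map_pow, map_X, map_C, Polynomial.map_mul, map_C, Polynomial.map_sub,
      Polynomial.map_pow, map_X, map_C, map_C, e1, e2]
    simp only [C_add, C_mul, C_pow]
    linear_combination (-(C (ℓ : E) : Polynomial E) ^ 2) * hzz
  -- from a unit cofactor to a contradiction
  have hcontra : ∀ (A : Polynomial F) (R : Polynomial E) (c : E), IsUnit R →
      A.map f = (X ^ m - C c) * R → (c = c₁ ∨ c = c₂) → False := by
    intro A R c hR hAR hc
    obtain ⟨x, hx⟩ := aux_factor_coeff f hm0 c hR hAR
    rcases hc with rfl | rfl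
    · refine hnotr ((x - γ) * (ℓ : F)⁻¹) ?_
      rw [map_mul, map_sub, hx, map_inv₀, map_natCast, hc1]
      first
      | (field_simp; ring)
      | field_simp
    · refine hnotr (((x - γ) * (ℓ : F)⁻¹)⁻¹) ?_
      have hxx : f ((x - γ) * (ℓ : F)⁻¹) = ζ⁻¹ := by
        rw [map_mul, map_sub, hx, map_inv₀, map_natCast, hc2]
        first
        | (field_simp; ring)
        | field_simp
      rw [map_inv₀, hxx, inv_inv]
  constructor
  · -- Q is not a unit
    intro hu
    have hdeg0 : Q.natDegree = 0 := Polynomial.natDegree_eq_zero_of_isUnit hu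
    have hdeg : (Q.map f).natDegree = m + m := by
      rw [hfac, Polynomial.natDegree_mul hPmonic.ne_zero hP'monic.ne_zero, hP, hP',
        natDegree_X_pow_sub_C, natDegree_X_pow_sub_C]
    have hle : (Q.map f).natDegree ≤ Q.natDegree := Polynomial.natDegree_map_le
    omega
  · -- any factorization has a unit factor
    intro A B hAB
    have hmfac : (A.map f) * (B.map f) = P * P' := by
      rw [← Polynomial.map_mul, ← hAB, hfac]
    have hPdvd : P ∣ (A.map f) * (B.map f) := ⟨P', hmfac⟩
    rcases hPprime.2.2 _ _ hPdvd with hdA | hdB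
    · obtain ⟨R, hR⟩ := hdA
      have hcan : R * (B.map f) = P' := by
        apply mul_left_cancel₀ hPmonic.ne_zero
        rw [← mul_assoc, ← hR, hmfac]
      rcases hirrP'.isUnit_or_isUnit hcan.symm with hu | hu
      · rw [hP] at hR
        exact (hcontra A R c₁ hu hR (Or.inl rfl)).elim
      · exact Or.inr (aux_map_unit_isUnit f hu)
    · obtain ⟨R, hR⟩ := hdB
      have hcan : R * (A.map f) = P' := by
        apply mul_left_cancel₀ hPmonic.ne_zero
        rw [← mul_assoc, ← hR, mul_comm (B.map f) (A.map f), hmfac]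
      rcases hirrP'.isUnit_or_isUnit hcan.symm with hu | hu
      · rw [hP] at hR
        exact (hcontra B R c₁ hu hR (Or.inl rfl)).elim
      · exact Or.inl (aux_map_unit_isUnit f hu)
end
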